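/- arXiv:1112.3254 — 4 statements merged into one kernel-verified Lean document; each statement's English description precedes it below -/
import Mathlib

section
/- Let ⟨P,T⟩ be a VPT-representation of a finite simple graph G, and let q be a vertex of T with degree d_T(q) = h ≥ 4 in T. Assume there exist two neighbors y_1, y_2 of q in T such that no path P_v (v∈V(G)) contains both y_1 and y_2. Then there exists a VPT-representation ⟨P',T'⟩ of G whose host tree T' has vertex set V(T)∪{a_q} for a new vertex a_q ∉ V(T), and such that the degree of a_q in T' is 3, the degree of q in T' is h−1, and every other vertex x ∈ V(T')∖{q,a_q} has the same degree in T' as in T. -/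
open SimpleGraph

/-- `S` induces a path (a nonempty connected subgraph with maximum degree at most 2,
i.e. a subtree which is a path when `T` is a tree) in the graph `T`. -/
def IsPathSet {W : Type*} (T : SimpleGraph W) (S : Set W) : Prop :=
  S.Nonempty ∧
  (∀ x ∈ S, ∀ y ∈ S, ∃ p : T.Walk x y, ∀ z ∈ p.support, z ∈ S) ∧
  (∀ x ∈ S, (T.neighborSet x ∩ S).ncard ≤ 2)

/-- A VPT-representation of `G` on host tree `T`: a family of paths of the tree `T`,
one for each vertex of `G`, such that two distinct vertices of `G` are adjacent iff
the corresponding paths share a vertex. -/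
structure VPTRep {V W : Type*} (G : SimpleGraph V) (T : SimpleGraph W) where
  tree : T.IsTree
  path : V → Set W
  isPath : ∀ v, IsPathSet T (path v)
  adj_iff : ∀ u v : V, u ≠ v → (G.Adj u v ↔ (path u ∩ path v).Nonempty)

/-- `G` is a VPT graph: it has a VPT-representation on some finite host tree. -/
def IsVPT {V : Type*} (G : SimpleGraph V) : Prop :=
  ∃ (n : ℕ) (T : SimpleGraph (Fin n)), Nonempty (VPTRep G T)

/-- `G` belongs to the class [h,2,1]: it has a VPT-representation whose host tree has
maximum degree at most `h`. -/
def MemH21 {V : Type*} (G : SimpleGraph V) (h : ℕ) : Prop :=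
  ∃ (n : ℕ) (T : SimpleGraph (Fin n)) (_ : VPTRep G T),
    ∀ x : Fin n, (T.neighborSet x).ncard ≤ h

/-- `C` is a clique of `G`: a maximal set of pairwise adjacent vertices. -/
def IsMaxClique {V : Type*} (G : SimpleGraph V) (C : Set V) : Prop :=
  G.IsClique C ∧ ∀ D, G.IsClique D → C ⊆ D → D = C

/-- The branch graph `B(G/C)`, as a graph on the vertex set of `G`; its relevant
vertices are those of `branchVerts G C`, all others are isolated. -/
def branchGraph {V : Type*} (G : SimpleGraph V) (C : Set V) : SimpleGraph V where
  Adj v w := v ∉ C ∧ w ∉ C ∧ v ≠ w ∧ ¬ G.Adj v w ∧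
    (∃ u ∈ C, G.Adj u v ∧ G.Adj u w) ∧
    (∃ v' ∈ C, G.Adj v' v ∧ ¬ G.Adj v' w) ∧
    (∃ w' ∈ C, G.Adj w' w ∧ ¬ G.Adj w' v)
  symm := ⟨by
    rintro v w ⟨h1, h2, h3, h4, ⟨u, hu, hu1, hu2⟩, ⟨v', hv', hv1, hv2⟩, ⟨w', hw', hw1, hw2⟩⟩
    exact ⟨h2, h1, h3.symm, fun hadj => h4 hadj.symm, ⟨u, hu, hu2, hu1⟩,
      ⟨w', hw', hw1, hw2⟩, ⟨v', hv', hv1, hv2⟩⟩⟩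
  loopless := ⟨by rintro v ⟨_, _, h, _⟩; exact h rfl⟩

/-- The vertex set of the branch graph `B(G/C)`: vertices outside `C` adjacent to
some vertex of `C`. -/
def branchVerts {V : Type*} (G : SimpleGraph V) (C : Set V) : Set V :=
  {v | v ∉ C ∧ ∃ u ∈ C, G.Adj u v}

/-- `B` is a branch of `T` at `q`: a connected component of `T - q`, i.e. the set of
vertices reachable from some neighbor `y` of `q` by a walk avoiding `q`. -/
def BranchAt {W : Type*} (T : SimpleGraph W) (q : W) (B : Set W) : Prop :=
  ∃ y, T.Adj q y ∧ B = {x | ∃ p : T.Walk y x, q ∉ p.support}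

/-- `(S, K)` is a split partition of `G`: `S` is a stable set, `K` is a complete set,
and they partition the vertices. -/
def IsSplitPartition {V : Type*} (G : SimpleGraph V) (S K : Set V) : Prop :=
  (∀ v, v ∈ S ∨ v ∈ K) ∧ Disjoint S K ∧
  (∀ a ∈ S, ∀ b ∈ S, ¬ G.Adj a b) ∧ G.IsClique K

section Aux
variable {n : ℕ} (T : SimpleGraph (Fin n)) (q y₁ y₂ : Fin n)

/-- The modified host tree: remove edges q-y₁ and q-y₂, add a new vertex `none`
adjacent to q, y₁, y₂. -/
def splitT : SimpleGraph (Option (Fin n)) where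
  Adj o₁ o₂ :=
    match o₁, o₂ with
    | some a, some b => T.Adj a b ∧ ¬(a = q ∧ (b = y₁ ∨ b = y₂)) ∧ ¬(b = q ∧ (a = y₁ ∨ a = y₂))
    | none, some a => a = q ∨ a = y₁ ∨ a = y₂
    | some a, none => a = q ∨ a = y₁ ∨ a = y₂
    | none, none => False
  symm := ⟨by rintro (_|a) (_|b) hab <;> simp_all <;> tauto⟩
  loopless := ⟨by rintro (_|a) hab <;> simp_all⟩

@[simp] lemma splitT_adj_some_some {a b : Fin n} :
    (splitT T q y₁ y₂).Adj (some a) (some b) ↔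
      T.Adj a b ∧ ¬(a = q ∧ (b = y₁ ∨ b = y₂)) ∧ ¬(b = q ∧ (a = y₁ ∨ a = y₂)) := Iff.rfl

@[simp] lemma splitT_adj_none_some {a : Fin n} :
    (splitT T q y₁ y₂).Adj none (some a) ↔ (a = q ∨ a = y₁ ∨ a = y₂) := Iff.rfl

@[simp] lemma splitT_adj_some_none {a : Fin n} :
    (splitT T q y₁ y₂).Adj (some a) none ↔ (a = q ∨ a = y₁ ∨ a = y₂) := Iff.rfl

@[simp] lemma splitT_adj_none_none :
    ¬ (splitT T q y₁ y₂).Adj none none := fun h => h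

end Aux

section NS
variable {n : ℕ} (T : SimpleGraph (Fin n)) (q y₁ y₂ : Fin n)

lemma splitT_ns_none :
    (splitT T q y₁ y₂).neighborSet none = {some q, some y₁, some y₂} := by
  ext (_|a) <;> simp [neighborSet]

lemma splitT_ns_q :
    (splitT T q y₁ y₂).neighborSet (some q) =
      insert none (some '' (T.neighborSet q \ {y₁, y₂})) := by
  ext (_|a)
  · simp [neighborSet]
  · simp only [neighborSet, Set.mem_setOf_eq, splitT_adj_some_some, Set.mem_insert_iff,
      Set.mem_image, Set.mem_diff, Set.mem_singleton_iff]
    constructor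
    · rintro ⟨h1, h2, h3⟩
      exact Or.inr ⟨a, ⟨h1, by tauto⟩, rfl⟩
    · rintro (h | ⟨b, ⟨h1, h2⟩, hb⟩)
      · exact absurd h (by simp)
      · cases hb
        refine ⟨h1, by tauto, ?_⟩
        rintro ⟨rfl, _⟩
        exact h1.ne rfl
  
lemma splitT_ns_y₁ (hq : y₁ ≠ q) (hyy : y₁ ≠ y₂) :
    (splitT T q y₁ y₂).neighborSet (some y₁) =
      insert none (some '' (T.neighborSet y₁ \ {q})) := by
  ext (_|a)
  · simp [neighborSet]
  · simp only [neighborSet, Set.mem_setOf_eq, splitT_adj_some_some, Set.mem_insert_iff,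
      Set.mem_image, Set.mem_diff, Set.mem_singleton_iff]
    constructor
    · rintro ⟨h1, h2, h3⟩
      refine Or.inr ⟨a, ⟨h1, ?_⟩, rfl⟩
      rintro rfl; exact h3 ⟨rfl, by simp⟩
    · rintro (h | ⟨b, ⟨h1, h2⟩, hb⟩)
      · exact absurd h (by simp)
      · cases hb
        exact ⟨h1, by tauto, by tauto⟩

lemma splitT_ns_y₂ (hq : y₂ ≠ q) (hyy : y₂ ≠ y₁) :
    (splitT T q y₁ y₂).neighborSet (some y₂) =
      insert none (some '' (T.neighborSet y₂ \ {q})) := by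
  ext (_|a)
  · simp [neighborSet]
  · simp only [neighborSet, Set.mem_setOf_eq, splitT_adj_some_some, Set.mem_insert_iff,
      Set.mem_image, Set.mem_diff, Set.mem_singleton_iff]
    constructor
    · rintro ⟨h1, h2, h3⟩
      refine Or.inr ⟨a, ⟨h1, ?_⟩, rfl⟩
      rintro rfl; exact h3 ⟨rfl, by simp⟩
    · rintro (h | ⟨b, ⟨h1, h2⟩, hb⟩)
      · exact absurd h (by simp)
      · cases hb
        exact ⟨h1, by tauto, by tauto⟩

lemma splitT_ns_other {x : Fin n} (h1 : x ≠ q) (h2 : x ≠ y₁) (h3 : x ≠ y₂) :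
    (splitT T q y₁ y₂).neighborSet (some x) = some '' (T.neighborSet x) := by
  ext (_|a)
  · simp [neighborSet, h1, h2, h3]
  · simp only [neighborSet, Set.mem_setOf_eq, splitT_adj_some_some, Set.mem_image]
    constructor
    · rintro ⟨hA, _, _⟩
      exact ⟨a, hA, rfl⟩
    · rintro ⟨b, hb, hb'⟩
      cases hb'
      exact ⟨hb, by tauto, by tauto⟩

end NS

section Deg
variable {n : ℕ} (T : SimpleGraph (Fin n)) {q y₁ y₂ : Fin n}
variable (hy : y₁ ≠ y₂) (hy₁ : T.Adj q y₁) (hy₂ : T.Adj q y₂)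

include hy hy₁ hy₂

lemma splitT_deg_none : ((splitT T q y₁ y₂).neighborSet none).ncard = 3 := by
  rw [splitT_ns_none]
  rw [Set.ncard_insert_of_notMem (by simp [hy₁.ne, hy₂.ne]),
    Set.ncard_pair (by simpa using hy)]

lemma splitT_deg_q :
    ((splitT T q y₁ y₂).neighborSet (some q)).ncard = (T.neighborSet q).ncard - 1 := by
  rw [splitT_ns_q]
  rw [Set.ncard_insert_of_notMem (by simp),
    Set.ncard_image_of_injective _ (Option.some_injective _),
    Set.ncard_diff ((Set.pair_subset hy₁ hy₂ : ({y₁, y₂} : Set (Fin n)) ⊆ T.neighborSet q)),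
    Set.ncard_pair hy]
  have h2 : 2 ≤ (T.neighborSet q).ncard := by
    have := Set.ncard_le_ncard ((Set.pair_subset hy₁ hy₂ : ({y₁, y₂} : Set (Fin n)) ⊆ T.neighborSet q))
      (Set.toFinite _)
    rwa [Set.ncard_pair hy] at this
  omega

omit hy₂ in
lemma splitT_deg_y₁ :
    ((splitT T q y₁ y₂).neighborSet (some y₁)).ncard = (T.neighborSet y₁).ncard := by
  rw [splitT_ns_y₁ T q y₁ y₂ (fun h => hy₁.ne' h) hy]
  rw [Set.ncard_insert_of_notMem (by simp),
    Set.ncard_image_of_injective _ (Option.some_injective _),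
    Set.ncard_diff_singleton_of_mem (by simpa using hy₁.symm)]
  have h1 : 0 < (T.neighborSet y₁).ncard :=
    (Set.ncard_pos (Set.toFinite _)).2 ⟨q, by simpa using hy₁.symm⟩
  omega

omit hy₁ in
lemma splitT_deg_y₂ :
    ((splitT T q y₁ y₂).neighborSet (some y₂)).ncard = (T.neighborSet y₂).ncard := by
  rw [splitT_ns_y₂ T q y₁ y₂ (fun h => hy₂.ne' h) hy.symm]
  rw [Set.ncard_insert_of_notMem (by simp),
    Set.ncard_image_of_injective _ (Option.some_injective _),
    Set.ncard_diff_singleton_of_mem (by simpa using hy₂.symm)]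
  have h1 : 0 < (T.neighborSet y₂).ncard :=
    (Set.ncard_pos (Set.toFinite _)).2 ⟨q, by simpa using hy₂.symm⟩
  omega

omit hy hy₁ hy₂ in
lemma splitT_deg_other {x : Fin n} (h1 : x ≠ q) (h2 : x ≠ y₁) (h3 : x ≠ y₂) :
    ((splitT T q y₁ y₂).neighborSet (some x)).ncard = (T.neighborSet x).ncard := by
  rw [splitT_ns_other T q y₁ y₂ h1 h2 h3,
    Set.ncard_image_of_injective _ (Option.some_injective _)]

end Deg

section Tree
variable {n : ℕ} (T : SimpleGraph (Fin n)) {q y₁ y₂ : Fin n}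

/-- `T` with the two edges `q-y₁`, `q-y₂` removed. -/
abbrev remT (T : SimpleGraph (Fin n)) (q y₁ y₂ : Fin n) : SimpleGraph (Fin n) :=
  T \ fromEdgeSet {s(q, y₁), s(q, y₂)}

lemma splitT_adj_iff_remT {a b : Fin n} :
    (splitT T q y₁ y₂).Adj (some a) (some b) ↔ (remT T q y₁ y₂).Adj a b := by
  simp only [splitT_adj_some_some, sdiff_adj, fromEdgeSet_adj, Set.mem_insert_iff,
    Set.mem_singleton_iff, Sym2.eq_iff]
  constructor
  · rintro ⟨h1, h2, h3⟩
    exact ⟨h1, by tauto⟩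
  · rintro ⟨h1, h2⟩
    have := h1.ne
    exact ⟨h1, by tauto, by tauto⟩

/-- Collapsing map on reachability. -/
lemma reachable_map_aux {W W' : Type*} (G : SimpleGraph W) (G' : SimpleGraph W') (f : W' → W)
    (hf : ∀ a b, G'.Adj a b → G.Adj (f a) (f b) ∨ f a = f b) {a b : W'}
    (h : G'.Reachable a b) : G.Reachable (f a) (f b) := by
  obtain ⟨w⟩ := h
  induction w with
  | nil => exact Reachable.refl _
  | cons hadj p ih =>
    rcases hf _ _ hadj with h' | h'
    · exact h'.reachable.trans ih
    · rw [h']; exact ih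

lemma splitT_reachable_of_adj (hy₁ : T.Adj q y₁) (hy₂ : T.Adj q y₂) {a b : Fin n}
    (hab : T.Adj a b) : (splitT T q y₁ y₂).Reachable (some a) (some b) := by
  by_cases hc : (a = q ∧ (b = y₁ ∨ b = y₂)) ∨ (b = q ∧ (a = y₁ ∨ a = y₂))
  · have h1 : (splitT T q y₁ y₂).Adj (some a) none := by
      simp only [splitT_adj_some_none]; tauto
    have h2 : (splitT T q y₁ y₂).Adj none (some b) := by
      simp only [splitT_adj_none_some]; tauto
    exact h1.reachable.trans h2.reachable
  · push_neg at hc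
    exact Adj.reachable (by simp only [splitT_adj_some_some]; tauto)

lemma splitT_connected (hT : T.Connected) (hy₁ : T.Adj q y₁) (hy₂ : T.Adj q y₂) :
    (splitT T q y₁ y₂).Connected := by
  rw [connected_iff]
  refine ⟨?_, ⟨none⟩⟩
  have key : ∀ a x : Fin n, (splitT T q y₁ y₂).Reachable (some a) (some x) := by
    intro a x
    obtain ⟨w⟩ := hT.preconnected a x
    induction w with
    | nil => exact Reachable.refl _
    | cons hadj p ih => exact (splitT_reachable_of_adj T hy₁ hy₂ hadj).trans ih
  have hq : (splitT T q y₁ y₂).Reachable none (some q) :=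
    Adj.reachable (by simp)
  rintro (_|a) (_|b)
  · exact Reachable.refl _
  · exact hq.trans (key q b)
  · exact ((hq.trans (key q a)).symm)
  · exact key a b

end Tree

section Acyclic
variable {n : ℕ} {T : SimpleGraph (Fin n)} {q y₁ y₂ : Fin n}

lemma remT_le₁ : remT T q y₁ y₂ ≤ T \ fromEdgeSet {s(q, y₁)} := by
  intro a b hab
  rw [sdiff_adj] at hab ⊢
  refine ⟨hab.1, fun hc => hab.2 ?_⟩
  rw [fromEdgeSet_adj] at hc ⊢
  simp only [Set.mem_singleton_iff] at hc
  exact ⟨by simp [hc.1], hc.2⟩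

lemma remT_le₂ : remT T q y₁ y₂ ≤ T \ fromEdgeSet {s(q, y₂)} := by
  intro a b hab
  rw [sdiff_adj] at hab ⊢
  refine ⟨hab.1, fun hc => hab.2 ?_⟩
  rw [fromEdgeSet_adj] at hc ⊢
  simp only [Set.mem_singleton_iff] at hc
  exact ⟨by simp [hc.1], hc.2⟩

lemma not_reach_y₁ (hac : T.IsAcyclic) (hy₁ : T.Adj q y₁) :
    ¬ (remT T q y₁ y₂).Reachable y₁ q := by
  intro h
  have hb := (isAcyclic_iff_forall_adj_isBridge.mp hac) hy₁
  rw [isBridge_iff] at hb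
  exact hb ((h.mono remT_le₁).symm)

lemma not_reach_y₂ (hac : T.IsAcyclic) (hy₂ : T.Adj q y₂) :
    ¬ (remT T q y₁ y₂).Reachable y₂ q := by
  intro h
  have hb := (isAcyclic_iff_forall_adj_isBridge.mp hac) hy₂
  rw [isBridge_iff] at hb
  exact hb ((h.mono remT_le₂).symm)

lemma splitT_walk_to_q (hac : T.IsAcyclic) (hy₁ : T.Adj q y₁) (hy₂ : T.Adj q y₂)
    (u v : Option (Fin n))
    (w : ((splitT T q y₁ y₂) \ fromEdgeSet {s(none, some q)}).Walk u v)
    (hv : v = some q) :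
    ∃ x, u = some x ∧ (remT T q y₁ y₂).Reachable x q := by
  induction w with
  | nil => exact ⟨q, hv, Reachable.refl q⟩
  | @cons u' v' _ hadj p ih =>
    obtain ⟨x, rfl, hr⟩ := ih hv
    rw [sdiff_adj] at hadj
    obtain ⟨ha, hne⟩ := hadj
    match u' with
    | some x' =>
      rw [splitT_adj_iff_remT] at ha
      exact ⟨x', rfl, ha.reachable.trans hr⟩
    | none =>
      rw [splitT_adj_none_some] at ha
      have hxq : x ≠ q := by
        rintro rfl
        exact hne (by rw [fromEdgeSet_adj]; simp)
      rcases ha with rfl | rfl | rfl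
      · exact absurd rfl hxq
      · exact absurd hr (not_reach_y₁ hac hy₁)
      · exact absurd hr (not_reach_y₂ hac hy₂)

lemma splitT_bridge_none (hac : T.IsAcyclic) (hy : y₁ ≠ y₂) (hy₁ : T.Adj q y₁)
    (hy₂ : T.Adj q y₂) {b : Fin n} (hadj : (splitT T q y₁ y₂).Adj none (some b)) :
    (splitT T q y₁ y₂).IsBridge s(none, some b) := by
  have hbr := isAcyclic_iff_forall_adj_isBridge.mp hac
  rw [isBridge_iff]
  refine fun hre => ?_
  rw [splitT_adj_none_some] at hadj
  rcases hadj with rfl | rfl | rfl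
  · -- b = q : use the walk lemma
    obtain ⟨w⟩ := hre
    obtain ⟨x, hx, _⟩ := splitT_walk_to_q hac hy₁ hy₂ none (some b) w rfl
    exact nomatch hx
  · -- b = y₁ : collapse none ↦ q, land in T \ {s(q,b)}
    have hb := hbr hy₁; rw [isBridge_iff] at hb
    refine hb ?_
    refine reachable_map_aux (T \ fromEdgeSet {s(q, b)}) _ (Option.getD · q) ?_ hre
    rintro (_|c) (_|d) hcd <;> rw [deleteEdges, sdiff_adj] at hcd <;> obtain ⟨hA, hne⟩ := hcd
    · exact absurd hA (splitT_adj_none_none T q b y₂)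
    · rw [splitT_adj_none_some] at hA
      have hd : d ≠ b := by
        rintro rfl
        exact hne (by rw [fromEdgeSet_adj]; simp)
      rcases hA with rfl | rfl | rfl
      · exact Or.inr rfl
      · exact absurd rfl hd
      · refine Or.inl ?_
        rw [sdiff_adj, fromEdgeSet_adj]
        simp only [Option.getD]
        refine ⟨hy₂, ?_⟩
        simp only [Set.mem_singleton_iff, Sym2.eq_iff]
        rintro ⟨h, -⟩
        have h0 := hy₁.ne
        have h1 := hy₂.ne
        have h2 := hy
        simp_all
    · rw [splitT_adj_some_none] at hA
      have hd : c ≠ b := by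
        rintro rfl
        exact hne (by rw [fromEdgeSet_adj]; simp [Sym2.eq_swap])
      rcases hA with rfl | rfl | rfl
      · exact Or.inr rfl
      · exact absurd rfl hd
      · refine Or.inl ?_
        rw [sdiff_adj, fromEdgeSet_adj]
        simp only [Option.getD]
        refine ⟨hy₂.symm, ?_⟩
        simp only [Set.mem_singleton_iff, Sym2.eq_iff]
        rintro ⟨h, -⟩
        have h0 := hy₁.ne
        have h1 := hy₂.ne
        have h2 := hy
        simp_all
    · refine Or.inl ?_
      rw [splitT_adj_iff_remT] at hA
      simp only [Option.getD]
      exact remT_le₁ hA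
  · -- b = y₂ : symmetric
    have hb := hbr hy₂; rw [isBridge_iff] at hb
    refine hb ?_
    refine reachable_map_aux (T \ fromEdgeSet {s(q, b)}) _ (Option.getD · q) ?_ hre
    rintro (_|c) (_|d) hcd <;> rw [deleteEdges, sdiff_adj] at hcd <;> obtain ⟨hA, hne⟩ := hcd
    · exact absurd hA (splitT_adj_none_none T q y₁ b)
    · rw [splitT_adj_none_some] at hA
      have hd : d ≠ b := by
        rintro rfl
        exact hne (by rw [fromEdgeSet_adj]; simp)
      rcases hA with rfl | rfl | rfl
      · exact Or.inr rfl
      · refine Or.inl ?_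
        rw [sdiff_adj, fromEdgeSet_adj]
        simp only [Option.getD]
        refine ⟨hy₁, ?_⟩
        simp only [Set.mem_singleton_iff, Sym2.eq_iff]
        rintro ⟨h, -⟩
        have h0 := hy₁.ne
        have h1 := hy₂.ne
        have h2 := hy
        simp_all
      · exact absurd rfl hd
    · rw [splitT_adj_some_none] at hA
      have hd : c ≠ b := by
        rintro rfl
        exact hne (by rw [fromEdgeSet_adj]; simp [Sym2.eq_swap])
      rcases hA with rfl | rfl | rfl
      · exact Or.inr rfl
      · refine Or.inl ?_
        rw [sdiff_adj, fromEdgeSet_adj]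
        simp only [Option.getD]
        refine ⟨hy₁.symm, ?_⟩
        simp only [Set.mem_singleton_iff, Sym2.eq_iff]
        rintro ⟨h, -⟩
        have h0 := hy₁.ne
        have h1 := hy₂.ne
        have h2 := hy
        simp_all
      · exact absurd rfl hd
    · refine Or.inl ?_
      rw [splitT_adj_iff_remT] at hA
      simp only [Option.getD]
      exact remT_le₂ hA

lemma splitT_acyclic (hac : T.IsAcyclic) (hy : y₁ ≠ y₂) (hy₁ : T.Adj q y₁) (hy₂ : T.Adj q y₂) :
    (splitT T q y₁ y₂).IsAcyclic := by
  rw [isAcyclic_iff_forall_adj_isBridge]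
  have hbr := isAcyclic_iff_forall_adj_isBridge.mp hac
  rintro (_|a) (_|b) hadj
  · exact absurd hadj (splitT_adj_none_none T q y₁ y₂)
  · exact splitT_bridge_none hac hy hy₁ hy₂ hadj
  · have := splitT_bridge_none hac hy hy₁ hy₂ hadj.symm
    rwa [Sym2.eq_swap] at this
  · -- some a - some b kept edge
    rw [isBridge_iff]
    refine fun hre => ?_
    have hkept := (splitT_adj_iff_remT T).mp hadj
    rw [sdiff_adj, fromEdgeSet_adj] at hkept
    have hTadj := hkept.1
    have hb := hbr hTadj; rw [isBridge_iff] at hb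
    refine hb ?_
    refine reachable_map_aux (T \ fromEdgeSet {s(a, b)}) _ (Option.getD · q) ?_ hre
    rintro (_|c) (_|d) hcd <;> rw [deleteEdges, sdiff_adj] at hcd <;> obtain ⟨hA, hne⟩ := hcd
    · exact absurd hA (splitT_adj_none_none T q y₁ y₂)
    · rw [splitT_adj_none_some] at hA
      rcases hA with rfl | rfl | rfl
      · exact Or.inr rfl
      · refine Or.inl ?_
        rw [sdiff_adj, fromEdgeSet_adj]
        simp only [Option.getD]
        refine ⟨hy₁, ?_⟩
        simp only [Set.mem_singleton_iff]
        rintro ⟨h, -⟩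
        exact hkept.2 ⟨by simp [← h], hTadj.ne⟩
      · refine Or.inl ?_
        rw [sdiff_adj, fromEdgeSet_adj]
        simp only [Option.getD]
        refine ⟨hy₂, ?_⟩
        simp only [Set.mem_singleton_iff]
        rintro ⟨h, -⟩
        exact hkept.2 ⟨by simp [← h], hTadj.ne⟩
    · rw [splitT_adj_some_none] at hA
      rcases hA with rfl | rfl | rfl
      · exact Or.inr rfl
      · refine Or.inl ?_
        rw [sdiff_adj, fromEdgeSet_adj]
        simp only [Option.getD]
        refine ⟨hy₁.symm, ?_⟩
        simp only [Set.mem_singleton_iff]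
        rintro ⟨h, -⟩
        exact hkept.2 ⟨by simp [← h, Sym2.eq_swap], hTadj.ne⟩
      · refine Or.inl ?_
        rw [sdiff_adj, fromEdgeSet_adj]
        simp only [Option.getD]
        refine ⟨hy₂.symm, ?_⟩
        simp only [Set.mem_singleton_iff]
        rintro ⟨h, -⟩
        exact hkept.2 ⟨by simp [← h, Sym2.eq_swap], hTadj.ne⟩
    · refine Or.inl ?_
      rw [splitT_adj_iff_remT, sdiff_adj] at hA
      rw [sdiff_adj, fromEdgeSet_adj]
      simp only [Option.getD]
      refine ⟨hA.1, ?_⟩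
      simp only [Set.mem_singleton_iff]
      rintro ⟨h, hcd⟩
      exact hne (by rw [fromEdgeSet_adj]
                    exact ⟨by simp only [Set.mem_singleton_iff]
                              simp only [Sym2.eq_iff] at h ⊢
                              tauto,
                           by simpa using hcd⟩)

lemma splitT_isTree (hT : T.IsTree) (hy : y₁ ≠ y₂) (hy₁ : T.Adj q y₁) (hy₂ : T.Adj q y₂) :
    (splitT T q y₁ y₂).IsTree :=
  ⟨splitT_connected T hT.isConnected hy₁ hy₂, splitT_acyclic hT.IsAcyclic hy hy₁ hy₂⟩

end Acyclic

section Rep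
variable {n : ℕ} {T : SimpleGraph (Fin n)} {q y₁ y₂ : Fin n}

/-- Lift a path set of `T` to the split tree. -/
def liftSet (q y₁ y₂ : Fin n) (S : Set (Fin n)) : Set (Option (Fin n)) :=
  {o | match o with
       | none => q ∈ S ∧ (y₁ ∈ S ∨ y₂ ∈ S)
       | some x => x ∈ S}

@[simp] lemma mem_liftSet_some {S : Set (Fin n)} {x : Fin n} :
    some x ∈ liftSet q y₁ y₂ S ↔ x ∈ S := Iff.rfl

@[simp] lemma mem_liftSet_none {S : Set (Fin n)} :
    none ∈ liftSet q y₁ y₂ S ↔ q ∈ S ∧ (y₁ ∈ S ∨ y₂ ∈ S) := Iff.rfl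

lemma lift_walk {S : Set (Fin n)} {a b : Fin n} (p : T.Walk a b)
    (hp : ∀ z ∈ p.support, z ∈ S) :
    ∃ p' : (splitT T q y₁ y₂).Walk (some a) (some b),
      ∀ z ∈ p'.support, z ∈ liftSet q y₁ y₂ S := by
  induction p with
  | nil =>
    refine ⟨Walk.nil, ?_⟩
    intro z hz
    simp only [Walk.support_nil, List.mem_singleton] at hz
    subst hz
    exact hp _ (by simp)
  | @cons a c b hadj p ih =>
    have haS : a ∈ S := hp a (by simp)
    have hcS : c ∈ S := hp c (by simp [Walk.support_cons])
    obtain ⟨p', hp'⟩ := ih (fun z hz => hp z (by simp [Walk.support_cons]; tauto))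
    by_cases hc : (a = q ∧ (c = y₁ ∨ c = y₂)) ∨ (c = q ∧ (a = y₁ ∨ a = y₂))
    · have h1 : (splitT T q y₁ y₂).Adj (some a) none := by
        simp only [splitT_adj_some_none]; tauto
      have h2 : (splitT T q y₁ y₂).Adj none (some c) := by
        simp only [splitT_adj_none_some]; tauto
      refine ⟨Walk.cons h1 (Walk.cons h2 p'), ?_⟩
      intro z hz
      simp only [Walk.support_cons, List.mem_cons] at hz
      rcases hz with rfl | rfl | hz
      · exact haS
      · rw [mem_liftSet_none]
        rcases hc with ⟨rfl, hc⟩ | ⟨rfl, hc⟩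
        · constructor
          · exact haS
          · rcases hc with rfl | rfl
            · exact Or.inl hcS
            · exact Or.inr hcS
        · constructor
          · exact hcS
          · rcases hc with rfl | rfl
            · exact Or.inl haS
            · exact Or.inr haS
      · exact hp' z hz
    · push_neg at hc
      refine ⟨Walk.cons (by simp only [splitT_adj_some_some]; tauto) p', ?_⟩
      intro z hz
      simp only [Walk.support_cons, List.mem_cons] at hz
      rcases hz with rfl | hz
      · exact haS
      · exact hp' z hz

lemma ncard_insert_none_image_diff (A : Set (Fin n)) (u : Fin n) (hu : u ∈ A) :
    (insert (none : Option (Fin n)) (some '' (A \ {u}))).ncard ≤ A.ncard := by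
  have h1 := Set.ncard_insert_le (none : Option (Fin n)) (some '' (A \ {u}))
  rw [Set.ncard_image_of_injective _ (Option.some_injective _),
    Set.ncard_diff_singleton_of_mem hu] at h1
  have h2 : 1 ≤ A.ncard := (Set.ncard_pos (Set.toFinite _)).2 ⟨u, hu⟩
  omega

lemma lift_deg {S : Set (Fin n)} (hy : y₁ ≠ y₂) (hy₁ : T.Adj q y₁) (hy₂ : T.Adj q y₂)
    (hdeg : ∀ x ∈ S, (T.neighborSet x ∩ S).ncard ≤ 2)
    (hnb : ¬(y₁ ∈ S ∧ y₂ ∈ S)) :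
    ∀ o ∈ liftSet q y₁ y₂ S,
      ((splitT T q y₁ y₂).neighborSet o ∩ liftSet q y₁ y₂ S).ncard ≤ 2 := by
  rintro (_|x) ho
  · -- o = none
    rw [mem_liftSet_none] at ho
    obtain ⟨hqS, hyS⟩ := ho
    rcases hyS with h1 | h1
    · have h2 : y₂ ∉ S := fun h => hnb ⟨h1, h⟩
      have hsub : (splitT T q y₁ y₂).neighborSet none ∩ liftSet q y₁ y₂ S ⊆
          {some q, some y₁} := by
        rintro z ⟨hz1, hz2⟩
        rw [splitT_ns_none] at hz1
        rcases hz1 with rfl | rfl | rfl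
        · exact Or.inl rfl
        · exact Or.inr rfl
        · exact absurd (mem_liftSet_some.mp hz2) h2
      calc ((splitT T q y₁ y₂).neighborSet none ∩ liftSet q y₁ y₂ S).ncard
          ≤ ({some q, some y₁} : Set (Option (Fin n))).ncard :=
            Set.ncard_le_ncard hsub (Set.toFinite _)
        _ ≤ 2 := (Set.ncard_insert_le _ _).trans (by simp)
    · have h2 : y₁ ∉ S := fun h => hnb ⟨h, h1⟩
      have hsub : (splitT T q y₁ y₂).neighborSet none ∩ liftSet q y₁ y₂ S ⊆
          {some q, some y₂} := by
        rintro z ⟨hz1, hz2⟩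
        rw [splitT_ns_none] at hz1
        rcases hz1 with rfl | rfl | rfl
        · exact Or.inl rfl
        · exact absurd (mem_liftSet_some.mp hz2) h2
        · exact Or.inr rfl
      calc ((splitT T q y₁ y₂).neighborSet none ∩ liftSet q y₁ y₂ S).ncard
          ≤ ({some q, some y₂} : Set (Option (Fin n))).ncard :=
            Set.ncard_le_ncard hsub (Set.toFinite _)
        _ ≤ 2 := (Set.ncard_insert_le _ _).trans (by simp)
  · -- o = some x
    rw [mem_liftSet_some] at ho
    have hxd := hdeg x ho
    by_cases hxq : x = q
    · subst hxq
      by_cases hni : y₁ ∈ S ∨ y₂ ∈ S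
      · rcases hni with h1 | h1
        · have hmem : y₁ ∈ T.neighborSet x ∩ S := ⟨hy₁, h1⟩
          have hsub : (splitT T x y₁ y₂).neighborSet (some x) ∩ liftSet x y₁ y₂ S ⊆
              insert none (some '' ((T.neighborSet x ∩ S) \ {y₁})) := by
            rintro (_|z) ⟨hz1, hz2⟩
            · exact Set.mem_insert _ _
            · rw [splitT_ns_q] at hz1
              rcases hz1 with h | h
              · exact absurd h (by simp)
              · obtain ⟨w, ⟨hw1, hw2⟩, hw3⟩ := h
                injection hw3 with hww
                subst hww
                refine Set.mem_insert_of_mem _ ⟨w, ⟨⟨hw1, mem_liftSet_some.mp hz2⟩, ?_⟩, rfl⟩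
                simp only [Set.mem_insert_iff, Set.mem_singleton_iff] at hw2
                simp only [Set.mem_singleton_iff]
                tauto
          calc ((splitT T x y₁ y₂).neighborSet (some x) ∩ liftSet x y₁ y₂ S).ncard
              ≤ (insert (none : Option (Fin n)) (some '' ((T.neighborSet x ∩ S) \ {y₁}))).ncard :=
                Set.ncard_le_ncard hsub (Set.toFinite _)
            _ ≤ (T.neighborSet x ∩ S).ncard := ncard_insert_none_image_diff _ _ hmem
            _ ≤ 2 := hxd
        · have hmem : y₂ ∈ T.neighborSet x ∩ S := ⟨hy₂, h1⟩
          have hsub : (splitT T x y₁ y₂).neighborSet (some x) ∩ liftSet x y₁ y₂ S ⊆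
              insert none (some '' ((T.neighborSet x ∩ S) \ {y₂})) := by
            rintro (_|z) ⟨hz1, hz2⟩
            · exact Set.mem_insert _ _
            · rw [splitT_ns_q] at hz1
              rcases hz1 with h | h
              · exact absurd h (by simp)
              · obtain ⟨w, ⟨hw1, hw2⟩, hw3⟩ := h
                injection hw3 with hww
                subst hww
                refine Set.mem_insert_of_mem _ ⟨w, ⟨⟨hw1, mem_liftSet_some.mp hz2⟩, ?_⟩, rfl⟩
                simp only [Set.mem_insert_iff, Set.mem_singleton_iff] at hw2
                simp only [Set.mem_singleton_iff]
                tauto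
          calc ((splitT T x y₁ y₂).neighborSet (some x) ∩ liftSet x y₁ y₂ S).ncard
              ≤ (insert (none : Option (Fin n)) (some '' ((T.neighborSet x ∩ S) \ {y₂}))).ncard :=
                Set.ncard_le_ncard hsub (Set.toFinite _)
            _ ≤ (T.neighborSet x ∩ S).ncard := ncard_insert_none_image_diff _ _ hmem
            _ ≤ 2 := hxd
      · -- neither y₁ nor y₂ in S, none not in lifted set
        have hsub : (splitT T x y₁ y₂).neighborSet (some x) ∩ liftSet x y₁ y₂ S ⊆
            some '' (T.neighborSet x ∩ S) := by
          rintro (_|z) ⟨hz1, hz2⟩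
          · exact absurd (mem_liftSet_none.mp hz2).2 hni
          · rw [splitT_ns_q] at hz1
            rcases hz1 with h | h
            · exact absurd h (by simp)
            · obtain ⟨w, ⟨hw1, _⟩, hw3⟩ := h
              injection hw3 with hww
              subst hww
              exact ⟨w, ⟨hw1, mem_liftSet_some.mp hz2⟩, rfl⟩
        calc ((splitT T x y₁ y₂).neighborSet (some x) ∩ liftSet x y₁ y₂ S).ncard
            ≤ (some '' (T.neighborSet x ∩ S)).ncard := Set.ncard_le_ncard hsub (Set.toFinite _)
          _ = (T.neighborSet x ∩ S).ncard :=
              Set.ncard_image_of_injective _ (Option.some_injective _)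
          _ ≤ 2 := hxd
    · by_cases hxy₁ : x = y₁
      · subst hxy₁
        by_cases hqS : q ∈ S
        · have hmem : q ∈ T.neighborSet x ∩ S := ⟨hy₁.symm, hqS⟩
          have hsub : (splitT T q x y₂).neighborSet (some x) ∩ liftSet q x y₂ S ⊆
              insert none (some '' ((T.neighborSet x ∩ S) \ {q})) := by
            rintro (_|z) ⟨hz1, hz2⟩
            · exact Set.mem_insert _ _
            · rw [splitT_ns_y₁ T q x y₂ (fun h => hy₁.ne' h) hy] at hz1
              rcases hz1 with h | h
              · exact absurd h (by simp)
              · obtain ⟨w, ⟨hw1, hw2⟩, hw3⟩ := h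
                injection hw3 with hww
                subst hww
                exact Set.mem_insert_of_mem _ ⟨w, ⟨⟨hw1, mem_liftSet_some.mp hz2⟩, hw2⟩, rfl⟩
          calc ((splitT T q x y₂).neighborSet (some x) ∩ liftSet q x y₂ S).ncard
              ≤ (insert (none : Option (Fin n)) (some '' ((T.neighborSet x ∩ S) \ {q}))).ncard :=
                Set.ncard_le_ncard hsub (Set.toFinite _)
            _ ≤ (T.neighborSet x ∩ S).ncard := ncard_insert_none_image_diff _ _ hmem
            _ ≤ 2 := hxd
        · have hsub : (splitT T q x y₂).neighborSet (some x) ∩ liftSet q x y₂ S ⊆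
              some '' (T.neighborSet x ∩ S) := by
            rintro (_|z) ⟨hz1, hz2⟩
            · exact absurd (mem_liftSet_none.mp hz2).1 hqS
            · rw [splitT_ns_y₁ T q x y₂ (fun h => hy₁.ne' h) hy] at hz1
              rcases hz1 with h | h
              · exact absurd h (by simp)
              · obtain ⟨w, ⟨hw1, _⟩, hw3⟩ := h
                injection hw3 with hww
                subst hww
                exact ⟨w, ⟨hw1, mem_liftSet_some.mp hz2⟩, rfl⟩
          calc ((splitT T q x y₂).neighborSet (some x) ∩ liftSet q x y₂ S).ncard
              ≤ (some '' (T.neighborSet x ∩ S)).ncard := Set.ncard_le_ncard hsub (Set.toFinite _)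
            _ = (T.neighborSet x ∩ S).ncard :=
                Set.ncard_image_of_injective _ (Option.some_injective _)
            _ ≤ 2 := hxd
      · by_cases hxy₂ : x = y₂
        · subst hxy₂
          by_cases hqS : q ∈ S
          · have hmem : q ∈ T.neighborSet x ∩ S := ⟨hy₂.symm, hqS⟩
            have hsub : (splitT T q y₁ x).neighborSet (some x) ∩ liftSet q y₁ x S ⊆
                insert none (some '' ((T.neighborSet x ∩ S) \ {q})) := by
              rintro (_|z) ⟨hz1, hz2⟩
              · exact Set.mem_insert _ _
              · rw [splitT_ns_y₂ T q y₁ x (fun h => hy₂.ne' h) (fun h => hy h.symm)] at hz1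
                rcases hz1 with h | h
                · exact absurd h (by simp)
                · obtain ⟨w, ⟨hw1, hw2⟩, hw3⟩ := h
                  injection hw3 with hww
                  subst hww
                  exact Set.mem_insert_of_mem _ ⟨w, ⟨⟨hw1, mem_liftSet_some.mp hz2⟩, hw2⟩, rfl⟩
            calc ((splitT T q y₁ x).neighborSet (some x) ∩ liftSet q y₁ x S).ncard
                ≤ (insert (none : Option (Fin n)) (some '' ((T.neighborSet x ∩ S) \ {q}))).ncard :=
                  Set.ncard_le_ncard hsub (Set.toFinite _)
              _ ≤ (T.neighborSet x ∩ S).ncard := ncard_insert_none_image_diff _ _ hmem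
              _ ≤ 2 := hxd
          · have hsub : (splitT T q y₁ x).neighborSet (some x) ∩ liftSet q y₁ x S ⊆
                some '' (T.neighborSet x ∩ S) := by
              rintro (_|z) ⟨hz1, hz2⟩
              · exact absurd (mem_liftSet_none.mp hz2).1 hqS
              · rw [splitT_ns_y₂ T q y₁ x (fun h => hy₂.ne' h) (fun h => hy h.symm)] at hz1
                rcases hz1 with h | h
                · exact absurd h (by simp)
                · obtain ⟨w, ⟨hw1, _⟩, hw3⟩ := h
                  injection hw3 with hww
                  subst hww
                  exact ⟨w, ⟨hw1, mem_liftSet_some.mp hz2⟩, rfl⟩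
            calc ((splitT T q y₁ x).neighborSet (some x) ∩ liftSet q y₁ x S).ncard
                ≤ (some '' (T.neighborSet x ∩ S)).ncard := Set.ncard_le_ncard hsub (Set.toFinite _)
              _ = (T.neighborSet x ∩ S).ncard :=
                  Set.ncard_image_of_injective _ (Option.some_injective _)
              _ ≤ 2 := hxd
        · -- generic x
          have hsub : (splitT T q y₁ y₂).neighborSet (some x) ∩ liftSet q y₁ y₂ S ⊆
              some '' (T.neighborSet x ∩ S) := by
            rintro (_|z) ⟨hz1, hz2⟩
            · rw [splitT_ns_other T q y₁ y₂ hxq hxy₁ hxy₂] at hz1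
              exact absurd hz1 (by simp)
            · rw [splitT_ns_other T q y₁ y₂ hxq hxy₁ hxy₂] at hz1
              obtain ⟨w, hw1, hw3⟩ := hz1
              injection hw3 with hww
              subst hww
              exact ⟨w, ⟨hw1, mem_liftSet_some.mp hz2⟩, rfl⟩
          calc ((splitT T q y₁ y₂).neighborSet (some x) ∩ liftSet q y₁ y₂ S).ncard
              ≤ (some '' (T.neighborSet x ∩ S)).ncard := Set.ncard_le_ncard hsub (Set.toFinite _)
            _ = (T.neighborSet x ∩ S).ncard :=
                Set.ncard_image_of_injective _ (Option.some_injective _)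
            _ ≤ 2 := hxd

end Rep


/-- If `⟨P,T⟩` is a VPT-representation of `G`, `q` has degree `h ≥ 4` in `T`,
and there are two neighbors `y₁ ≠ y₂` of `q` such that no path of the representation
contains both, then `G` has a VPT-representation on a tree `T'` whose vertex set is
`V(T) ∪ {a_q}` (modelled as `Option (Fin n)` with `a_q = none`) with
`d_{T'}(a_q) = 3`, `d_{T'}(q) = h - 1`, and all other degrees unchanged. -/
theorem stmt2 {V : Type} [Fintype V] {n : ℕ} (G : SimpleGraph V) (T : SimpleGraph (Fin n))
    (rep : VPTRep G T) (q : Fin n) (h : ℕ) (hh : 4 ≤ h)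
    (hdeg : (T.neighborSet q).ncard = h)
    (y₁ y₂ : Fin n) (hy : y₁ ≠ y₂) (hy₁ : T.Adj q y₁) (hy₂ : T.Adj q y₂)
    (hno : ∀ v : V, ¬ ({y₁, y₂} ⊆ rep.path v)) :
    ∃ (T' : SimpleGraph (Option (Fin n))) (_ : VPTRep G T'),
      (T'.neighborSet none).ncard = 3 ∧
      (T'.neighborSet (some q)).ncard = h - 1 ∧
      (∀ x : Fin n, x ≠ q → (T'.neighborSet (some x)).ncard = (T.neighborSet x).ncard) := by

  classical
  refine ⟨splitT T q y₁ y₂, ?_, ?_, ?_, ?_⟩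
  · refine ⟨splitT_isTree rep.tree hy hy₁ hy₂, fun v => liftSet q y₁ y₂ (rep.path v), ?_, ?_⟩
    · intro v
      obtain ⟨⟨x0, hx0⟩, hconn, hd⟩ := rep.isPath v
      refine ⟨⟨some x0, hx0⟩, ?_,
        lift_deg hy hy₁ hy₂ hd (fun hc => hno v (Set.pair_subset hc.1 hc.2))⟩
      have key : ∀ (b : Fin n), b ∈ rep.path v →
          (q ∈ rep.path v ∧ (y₁ ∈ rep.path v ∨ y₂ ∈ rep.path v)) →
          ∃ p' : (splitT T q y₁ y₂).Walk none (some b),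
            ∀ z ∈ p'.support, z ∈ liftSet q y₁ y₂ (rep.path v) := by
        intro b hB hA
        obtain ⟨p, hp⟩ := hconn q hA.1 b hB
        obtain ⟨p', hp'⟩ := lift_walk p hp
        refine ⟨Walk.cons (by simp) p', ?_⟩
        intro z hz
        simp only [Walk.support_cons, List.mem_cons] at hz
        rcases hz with rfl | hz
        · exact hA
        · exact hp' z hz
      rintro (_|a) hA (_|b) hB
      · refine ⟨Walk.nil, ?_⟩
        intro z hz
        simp only [Walk.support_nil, List.mem_singleton] at hz
        subst hz; exact hA
      · exact key b hB hA
      · obtain ⟨p', hp'⟩ := key a hA hB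
        refine ⟨p'.reverse, ?_⟩
        intro z hz
        rw [Walk.support_reverse, List.mem_reverse] at hz
        exact hp' z hz
      · obtain ⟨p, hp⟩ := hconn a hA b hB
        exact lift_walk p hp
    · intro u v huv
      rw [rep.adj_iff u v huv]
      constructor
      · rintro ⟨x, hx1, hx2⟩
        exact ⟨some x, hx1, hx2⟩
      · rintro ⟨(_|x), hx1, hx2⟩
        · exact ⟨q, (mem_liftSet_none.mp hx1).1, (mem_liftSet_none.mp hx2).1⟩
        · exact ⟨x, hx1, hx2⟩
  · exact splitT_deg_none T hy hy₁ hy₂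
  · rw [splitT_deg_q T hy hy₁ hy₂, hdeg]
  · intro x hxq
    by_cases hx1 : x = y₁
    · subst hx1; exact splitT_deg_y₁ T hy hy₁
    · by_cases hx2 : x = y₂
      · subst hx2; exact splitT_deg_y₂ T hy hy₂
      · exact splitT_deg_other T hxq hx1 hx2
end

section
/- Let G be a finite simple graph with a VPT-representation ⟨P,T⟩. For every clique C of G there exists a vertex q of T such that C = C_q, i.e., C = {v∈V(G) : q∈V(P_v)}. -/
open SimpleGraph

namespace HellyAux

variable {W : Type*} [DecidableEq W] {T : SimpleGraph W}

/-- a subtree contains the support of any path between two of its points -/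
lemma subtree_contains_path (hac : T.IsAcyclic) {S : Set W}
    (hS : ∀ x ∈ S, ∀ y ∈ S, ∃ p : T.Walk x y, ∀ z ∈ p.support, z ∈ S)
    {x y : W} (hx : x ∈ S) (hy : y ∈ S) (p : T.Walk x y) (hp : p.IsPath) :
    ∀ z ∈ p.support, z ∈ S := by
  obtain ⟨w, hw⟩ := hS x hx y hy
  have huniq := hac.path_unique ⟨p, hp⟩ w.toPath
  intro z hz
  have : z ∈ (w.toPath : T.Walk x y).support := by rw [← huniq]; exact hz
  exact hw z (w.support_bypass_subset this)

/-- first vertex of a path belonging to a set -/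
lemma exists_first_mem {S : Set W} :
    ∀ {x y : W} (w : T.Walk x y), w.IsPath → y ∈ S →
    ∃ m, m ∈ S ∧ ∃ q : T.Walk x m, q.IsPath ∧ (∀ z ∈ q.support, z ∈ w.support) ∧
      (∀ z ∈ q.support, z ∈ S → z = m) := by
  intro x y w
  induction w with
  | @nil u =>
    intro _ hy
    exact ⟨u, hy, Walk.nil, Walk.IsPath.nil, by simp, by simp⟩
  | @cons a b c h w ih =>
    intro hp hy
    by_cases ha : a ∈ S
    · exact ⟨a, ha, Walk.nil, Walk.IsPath.nil, by simp, by simp⟩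
    · obtain ⟨m, hm, q, hq, hsub, hfirst⟩ := ih hp.of_cons hy
      have hanotin : a ∉ q.support := fun hin => ((Walk.cons_isPath_iff h w).mp hp).2 (hsub a hin)
      refine ⟨m, hm, Walk.cons h q, hq.cons hanotin, ?_, ?_⟩
      · intro z hz
        rw [Walk.support_cons] at hz ⊢
        rcases List.mem_cons.mp hz with rfl | hz
        · exact List.mem_cons_self
        · exact List.mem_cons_of_mem _ (hsub z hz)
      · intro z hz hzS
        rw [Walk.support_cons] at hz
        rcases List.mem_cons.mp hz with rfl | hz
        · exact absurd hzS ha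
        · exact hfirst z hz hzS

/-- median: three paths between three points share a vertex -/
lemma median (hac : T.IsAcyclic) {a b c : W}
    (pab : T.Walk a b) (pbc : T.Walk b c) (pac : T.Walk a c)
    (h1 : pab.IsPath) (h2 : pbc.IsPath) (h3 : pac.IsPath) :
    ∃ m, m ∈ pab.support ∧ m ∈ pbc.support ∧ m ∈ pac.support := by
  obtain ⟨m, hm, q, hq, hsub, hfirst⟩ :=
    exists_first_mem (S := {z | z ∈ pac.support}) pab.reverse h1.reverse
      (by simp [Walk.end_mem_support])
  have hmpab : m ∈ pab.support := by
    have := hsub m q.end_mem_support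
    rwa [Walk.support_reverse, List.mem_reverse] at this
  refine ⟨m, hmpab, ?_, hm⟩
  -- build path b → c through m
  set r := pac.dropUntil m hm with hr
  have hrp : r.IsPath := h3.dropUntil hm
  have hrsub : ∀ z ∈ r.support, z ∈ pac.support := fun z hz =>
    Walk.support_dropUntil_subset pac hm hz
  have hW : (q.append r).IsPath := by
    rw [Walk.isPath_def, Walk.support_append, List.nodup_append]
    refine ⟨hq.support_nodup, ?_, ?_⟩
    · have := hrp.support_nodup
      rw [r.support_eq_cons] at this
      exact this.of_cons
    · intro z hzq b hzr hzb
      rw [← hzb] at hzr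
      have hz' : z ∈ r.support := List.mem_of_mem_tail hzr
      have : z = m := hfirst z hzq (hrsub z hz')
      subst this
      have := hrp.support_nodup
      rw [r.support_eq_cons] at this
      exact (List.nodup_cons.mp this).1 hzr
  have huniq := hac.path_unique ⟨pbc, h2⟩ ⟨q.append r, hW⟩
  have hmW : m ∈ (q.append r).support := by
    rw [Walk.mem_support_append_iff]
    exact Or.inl q.end_mem_support
  rw [show pbc = (⟨q.append r, hW⟩ : T.Path b c).val from congrArg Subtype.val huniq]
  exact hmW

/-- Helly property for subtrees of a tree -/
lemma helly {ι : Type*} (hT : T.IsTree) (F : Finset ι) (f : ι → Set W)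
    (hconn : ∀ i ∈ F, ∀ x ∈ f i, ∀ y ∈ f i, ∃ p : T.Walk x y, ∀ z ∈ p.support, z ∈ f i)
    (hne : ∀ i ∈ F, (f i).Nonempty)
    (hpair : ∀ i ∈ F, ∀ j ∈ F, (f i ∩ f j).Nonempty)
    (hF : F.Nonempty) :
    ∃ q, ∀ i ∈ F, q ∈ f i := by
  classical
  induction F using Finset.induction generalizing f with
  | empty => exact absurd hF (by simp)
  | @insert a F ha ih =>
    rcases F.eq_empty_or_nonempty with rfl | hFne
    · obtain ⟨x, hx⟩ := hne a (Finset.mem_insert_self a _)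
      exact ⟨x, by simpa using hx⟩
    · -- apply IH to f' := fun j => f j ∩ f a
      set f' : ι → Set W := fun j => f j ∩ f a with hf'
      have hmem : ∀ i ∈ F, i ∈ insert a F := fun i hi => Finset.mem_insert_of_mem hi
      have hamem : a ∈ insert a F := Finset.mem_insert_self a F
      have hconn' : ∀ i ∈ F, ∀ x ∈ f' i, ∀ y ∈ f' i,
          ∃ p : T.Walk x y, ∀ z ∈ p.support, z ∈ f' i := by
        intro i hi x hx y hy
        obtain ⟨w, hw⟩ := hconn i (hmem i hi) x hx.1 y hy.1
        refine ⟨w.toPath, fun z hz => ?_⟩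
        have hzi : z ∈ f i := subtree_contains_path hT.IsAcyclic (hconn i (hmem i hi))
          hx.1 hy.1 w.toPath w.toPath.prop z hz
        have hza : z ∈ f a := subtree_contains_path hT.IsAcyclic (hconn a hamem)
          hx.2 hy.2 w.toPath w.toPath.prop z hz
        exact ⟨hzi, hza⟩
      have hne' : ∀ i ∈ F, (f' i).Nonempty := fun i hi =>
        hpair i (hmem i hi) a hamem
      have hpair' : ∀ i ∈ F, ∀ j ∈ F, (f' i ∩ f' j).Nonempty := by
        intro i hi j hj
        -- 3-set Helly on f i, f j, f a
        obtain ⟨x, hxi, hxj⟩ := hpair i (hmem i hi) j (hmem j hj)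
        obtain ⟨y, hyj, hya⟩ := hpair j (hmem j hj) a hamem
        obtain ⟨z, hzi, hza⟩ := hpair i (hmem i hi) a hamem
        -- paths: x→y inside f j, y→z inside f a, x→z inside f i
        obtain ⟨w1, hw1⟩ := hconn j (hmem j hj) x hxj y hyj
        obtain ⟨w2, hw2⟩ := hconn a hamem y hya z hza
        obtain ⟨w3, hw3⟩ := hconn i (hmem i hi) x hxi z hzi
        obtain ⟨m, hm1, hm2, hm3⟩ := median hT.IsAcyclic (w1.toPath : T.Walk x y) (w2.toPath : T.Walk y z) (w3.toPath : T.Walk x z)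
          w1.toPath.prop w2.toPath.prop w3.toPath.prop
        have hmj : m ∈ f j := subtree_contains_path hT.IsAcyclic (hconn j (hmem j hj))
          hxj hyj w1.toPath w1.toPath.prop m hm1
        have hma : m ∈ f a := subtree_contains_path hT.IsAcyclic (hconn a hamem)
          hya hza w2.toPath w2.toPath.prop m hm2
        have hmi : m ∈ f i := subtree_contains_path hT.IsAcyclic (hconn i (hmem i hi))
          hxi hzi w3.toPath w3.toPath.prop m hm3
        exact ⟨m, ⟨hmi, hma⟩, ⟨hmj, hma⟩⟩
      obtain ⟨q, hq⟩ := ih f' hconn' hne' hpair' hFne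
      refine ⟨q, fun i hi => ?_⟩
      rcases Finset.mem_insert.mp hi with rfl | hi
      · exact (hq _ hFne.choose_spec).2
      · exact (hq i hi).1

end HellyAux


/-- In a VPT-representation `⟨P,T⟩` of `G`, for every clique `C` of `G`
there is a vertex `q` of `T` with `C = C_q = {v : q ∈ P_v}`. -/
theorem stmt3 {V : Type} [Fintype V] {n : ℕ} (G : SimpleGraph V) (T : SimpleGraph (Fin n))
    (rep : VPTRep G T) (C : Set V) (hC : IsMaxClique G C) :
    ∃ q : Fin n, C = {v : V | q ∈ rep.path v} := by
    classical
  have hWne : Nonempty (Fin n) := rep.tree.isConnected.nonempty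
  obtain ⟨q, hq⟩ : ∃ q : Fin n, ∀ v ∈ C, q ∈ rep.path v := by
    rcases C.eq_empty_or_nonempty with rfl | hCne
    · exact ⟨Classical.arbitrary _, by simp⟩
    · obtain ⟨q, hq⟩ := HellyAux.helly rep.tree (Set.toFinite C).toFinset rep.path
        (fun i _ => rep.isPath i |>.2.1)
        (fun i _ => (rep.isPath i).1)
        (fun i hi j hj => by
          rw [Set.Finite.mem_toFinset] at hi hj
          by_cases hij : i = j
          · subst hij; simpa [Set.inter_self] using (rep.isPath i).1
          · exact (rep.adj_iff i j hij).mp (hC.1 hi hj hij))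
        ((Set.Finite.toFinset_nonempty _).mpr hCne)
      exact ⟨q, fun v hv => hq v ((Set.Finite.mem_toFinset _).mpr hv)⟩
  refine ⟨q, ?_⟩
  have hclique : G.IsClique {v | q ∈ rep.path v} := by
    intro u hu v hv huv
    exact (rep.adj_iff u v huv).mpr ⟨q, hu, hv⟩
  exact (hC.2 _ hclique hq).symm
end

section
/- Let G be a finite connected simple graph with vertex set {v_1,…,v_n}, and let Ĝ be the split VPT graph constructed from G as follows: the host tree T is a star with center q and leaves y_1,…,y_n; the path family consists of a one-vertex path P_i = {y_i} for each 1≤i≤n, a path P_{ij} = {y_i,q,y_j} for each pair i<j with v_iv_j∈E(G), and a path P_{iq} = {q,y_i} for each i with d_G(v_i)=1; Ĝ is the vertex intersection graph of this path family. Then for every h ≥ 4, Ĝ belongs to [h,2,1] but not to [h−1,2,1] if and only if the chromatic number χ(G) equals h. -/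
open SimpleGraph

/-- The vertex intersection graph of a family of sets `f`. -/
def interGraph {I W : Type*} (f : I → Set W) : SimpleGraph I where
  Adj u v := u ≠ v ∧ (f u ∩ f v).Nonempty
  symm := ⟨by
    rintro u v ⟨h1, h2⟩
    exact ⟨h1.symm, by rwa [Set.inter_comm]⟩⟩
  loopless := ⟨by rintro u ⟨h, _⟩; exact h rfl⟩

/-- Index type for the path family of the graph `Ĝ` built from `G`:
`Sum.inl i` is the one-vertex path `Pᵢ = {yᵢ}`; `Sum.inr (Sum.inl ⟨(i,j),_⟩)` is the
path `Pᵢⱼ = {yᵢ, q, yⱼ}` for an edge `vᵢvⱼ` with `i < j`; `Sum.inr (Sum.inr ⟨i,_⟩)` is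
the path `P_{iq} = {q, yᵢ}` for a vertex `vᵢ` of degree 1. -/
abbrev HatIdx (n : ℕ) (G : SimpleGraph (Fin n)) : Type :=
  Fin n ⊕ ({p : Fin n × Fin n // p.1 < p.2 ∧ G.Adj p.1 p.2} ⊕
    {i : Fin n // (G.neighborSet i).ncard = 1})

/-- The path family on the star host tree: the tree has center `q = none` and
leaves `yᵢ = some i`. -/
def hatPath (n : ℕ) (G : SimpleGraph (Fin n)) : HatIdx n G → Set (Option (Fin n))
  | Sum.inl i => {some i}
  | Sum.inr (Sum.inl p) => {some p.1.1, none, some p.1.2}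
  | Sum.inr (Sum.inr i) => {none, some i.1}

/-- The graph `Ĝ` built from `G`: the vertex intersection graph of the above path
family in the star tree. -/
def hatG (n : ℕ) (G : SimpleGraph (Fin n)) : SimpleGraph (HatIdx n G) :=
  interGraph (hatPath n G)

/-- The central clique `C_q` of `Ĝ`: all paths containing the center `q = none`. -/
def hatCq (n : ℕ) (G : SimpleGraph (Fin n)) : Set (HatIdx n G) :=
  {u | none ∈ hatPath n G u}



namespace VPTAux

variable {V : Type*}

def parentGraph (par : V → V) : SimpleGraph V where
  Adj x y := x ≠ y ∧ (par x = y ∨ par y = x)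
  symm := ⟨by rintro x y ⟨h1, h2⟩; exact ⟨h1.symm, h2.symm⟩⟩
  loopless := ⟨by rintro x ⟨h, _⟩; exact h rfl⟩

variable {par : V → V} {rank : V → ℕ} {root : V}

section

variable (hroot : par root = root) (hdec : ∀ x, x ≠ root → rank (par x) < rank x)

include hdec in
lemma par_ne (x : V) (hx : x ≠ root) : par x ≠ x :=
  fun h => absurd (h ▸ hdec x hx) (lt_irrefl _)

include hroot in
lemma iter_root (m : ℕ) : par^[m] root = root := by
  induction m with
  | zero => rfl
  | succ m ih => rw [Function.iterate_succ_apply', ih, hroot]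

include hroot hdec in
lemma iter_rank (m : ℕ) (x : V) : rank (par^[m] x) ≤ rank x := by
  induction m with
  | zero => exact le_rfl
  | succ m ih =>
    rw [Function.iterate_succ_apply']
    rcases eq_or_ne (par^[m] x) root with h | h
    · rw [h, hroot]; exact h ▸ ih
    · exact le_trans (le_of_lt (hdec _ h)) ih

include hroot hdec in
lemma reach_root (x : V) : ∃ m, par^[m] x = root := by
  obtain ⟨n, hn⟩ : ∃ n, rank x ≤ n := ⟨rank x, le_rfl⟩
  induction n generalizing x with
  | zero =>
    rcases eq_or_ne x root with rfl | hx
    · exact ⟨0, rfl⟩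
    · exact absurd (Nat.lt_of_lt_of_le (hdec x hx) hn) (Nat.not_lt_zero _)
  | succ n ih =>
    rcases eq_or_ne x root with rfl | hx
    · exact ⟨0, rfl⟩
    · obtain ⟨m, hm⟩ := ih (par x) (by have := hdec x hx; omega)
      exact ⟨m + 1, by rwa [Function.iterate_succ_apply]⟩

lemma adj_par (x : V) (h : par x ≠ x) : (parentGraph par).Adj x (par x) :=
  ⟨Ne.symm h, Or.inl rfl⟩

/-- A walk from `x` to `par^[m] x` staying within the ancestor chain of `x`. -/
lemma walkChain (m : ℕ) (x : V) :
    ∃ w : (parentGraph par).Walk x (par^[m] x),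
      ∀ z ∈ w.support, ∃ l, l ≤ m ∧ par^[l] x = z := by
  induction m with
  | zero => exact ⟨Walk.nil, by rintro z hz; simp at hz; exact ⟨0, le_rfl, hz.symm⟩⟩
  | succ m ih =>
    obtain ⟨w, hw⟩ := ih
    rcases eq_or_ne (par^[m+1] x) (par^[m] x) with h | h
    · refine ⟨w.copy rfl h.symm, ?_⟩
      intro z hz
      rw [Walk.support_copy] at hz
      obtain ⟨l, hl, hlz⟩ := hw z hz
      exact ⟨l, Nat.le_succ_of_le hl, hlz⟩
    · refine ⟨w.concat (show (parentGraph par).Adj _ _ from ⟨Ne.symm h, Or.inl (Function.iterate_succ_apply' par m x).symm⟩), ?_⟩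
      intro z hz
      rw [Walk.support_concat, List.mem_append] at hz
      rcases hz with hz | hz
      · obtain ⟨l, hl, hlz⟩ := hw z hz
        exact ⟨l, Nat.le_succ_of_le hl, hlz⟩
      · simp at hz
        exact ⟨m + 1, le_rfl, hz.symm⟩

include hroot hdec in
lemma pg_connected [Nonempty V] : (parentGraph par).Connected := by
  have key : ∀ x : V, (parentGraph par).Reachable x root := by
    intro x
    obtain ⟨m, hm⟩ := reach_root hroot hdec x
    obtain ⟨w, -⟩ := walkChain (par := par) m x
    exact ⟨w.copy rfl hm⟩
  exact ⟨fun x y => (key x).trans (key y).symm⟩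

include hroot hdec in
lemma desc_not_mem_par {x : V} (hx : x ≠ root) : ¬ ∃ m, par^[m] (par x) = x := by
  rintro ⟨m, hm⟩
  have h1 : rank (par^[m] (par x)) ≤ rank (par x) := iter_rank hroot hdec m _
  rw [hm] at h1
  exact absurd (lt_of_le_of_lt h1 (hdec x hx)) (lt_irrefl _)

include hroot hdec in
lemma pg_acyclic : (parentGraph par).IsAcyclic := by
  rw [isAcyclic_iff_forall_adj_isBridge]
  intro v w hvw
  -- WLOG par v = w
  have key : ∀ v w : V, par v = w → v ≠ w → (parentGraph par).IsBridge s(v, w) := by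
    intro x px hpx hne
    rw [isBridge_iff_adj_and_forall_walk_mem_edges]
    have hxroot : x ≠ root := fun h => hne (by rw [← hpx, h, hroot])
    -- A = descendants of x
    set A : Set V := {z | ∃ m, par^[m] z = x} with hA
    have hxA : x ∈ A := ⟨0, rfl⟩
    have hpxA : px ∉ A := hpx ▸ desc_not_mem_par hroot hdec hxroot
    have hparA : ∀ z ∈ A, z ≠ x → par z ∈ A := by
      rintro z ⟨m, hm⟩ hzx
      cases m with
      | zero => exact absurd hm hzx
      | succ m => exact ⟨m, by rwa [Function.iterate_succ_apply] at hm⟩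
    -- any walk from inside A to outside A uses the edge
    have main : ∀ (a b : V) (p : (parentGraph par).Walk a b), a ∈ A → b ∉ A →
        s(x, px) ∈ p.edges := by
      intro a b p
      induction p with
      | nil => intro h1 h2; exact absurd h1 h2
      | @cons a c b hac p ih =>
        intro haA hbA
        by_cases hcA : c ∈ A
        · rw [Walk.edges_cons]; exact List.mem_cons_of_mem _ (ih hcA hbA)
        · -- the edge a-c crosses the cut, so it must be the deleted edge
          obtain ⟨hne', h | h⟩ := id hac
          · -- par a = c
            have hax : a = x := by
              by_contra hax
              exact hcA (h ▸ hparA a haA hax)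
            subst hax
            have : px = c := by rw [← hpx, h]
            subst this
            rw [Walk.edges_cons]
            exact List.mem_cons_self
          · -- par c = a : then c ∈ A
            exfalso
            obtain ⟨m, hm⟩ := haA
            exact hcA ⟨m + 1, by rwa [Function.iterate_succ_apply, h]⟩
    intro p
    exact main x px p hxA hpxA
  rcases hvw with ⟨hne, h | h⟩
  · exact key v w h hne
  · rw [Sym2.eq_swap]; exact key w v h (Ne.symm hne)

end



lemma ncard_le_one_of_subsingleton {α : Type*} {s : Set α} (h : s.Subsingleton) :
    s.ncard ≤ 1 := by
  rcases h.eq_empty_or_singleton with rfl | ⟨x, rfl⟩ <;> simp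

section Construction

variable {n k : ℕ} {G : SimpleGraph (Fin n)} (C : G.Coloring (Fin k))

/-- the set of earlier vertices with the same color -/
def pset (i : Fin n) : Finset (Fin n) :=
  Finset.univ.filter (fun j => j < i ∧ C j = C i)

def parent' : Option (Fin n × Bool) → Option (Fin n × Bool)
  | none => none
  | some (i, true) => some (i, false)
  | some (i, false) => (pset C i).max.recBotCoe none (fun j => some (j, false))

def rank' : Option (Fin n × Bool) → ℕ
  | none => 0
  | some (i, b) => 2 * (i : ℕ) + (cond b 2 1)

lemma parent'_shape (v : Option (Fin n × Bool)) :
    parent' C v = none ∨ ∃ j, parent' C v = some (j, false) := by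
  match v with
  | none => exact Or.inl rfl
  | some (i, true) => exact Or.inr ⟨i, rfl⟩
  | some (i, false) =>
    rcases h : (pset C i).max with _ | j
    · exact Or.inl (by simp [parent', h, WithBot.recBotCoe])
    · exact Or.inr ⟨j, by simp [parent', h, WithBot.recBotCoe]⟩

lemma rank'_dec (v : Option (Fin n × Bool)) (hv : v ≠ none) :
    rank' (parent' C v) < rank' v := by
  match v with
  | none => exact absurd rfl hv
  | some (i, true) => simp [parent', rank']
  | some (i, false) =>
    rcases h : (pset C i).max with _ | j
    · simp [parent', h, WithBot.recBotCoe, rank']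
    · have hj : j ∈ pset C i := Finset.mem_of_max h
      have : j < i := (Finset.mem_filter.mp hj).2.1
      simp only [parent', h, WithBot.recBotCoe, rank']
      have : (j : ℕ) < (i : ℕ) := this
      omega

lemma rank'_inj : Function.Injective (rank' (n := n)) := by
  rintro (_ | ⟨i, b⟩) (_ | ⟨j, c⟩) h <;> simp only [rank'] at h
  · rfl
  · cases c <;> simp at h <;> omega
  · cases b <;> simp at h <;> omega
  · cases b <;> cases c <;> simp at h <;>
      (try omega) <;>
      · have : i = j := Fin.ext (by omega)
        subst this; rfl

/-- color of the originating vertex, if any -/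
def zone' : Option (Fin n × Bool) → Option (Fin k)
  | none => none
  | some (i, _) => some (C i)

lemma zone'_parent (v : Option (Fin n × Bool)) (c : Fin k) (hv : zone' C v = some c) :
    zone' C (parent' C v) = none ∨ zone' C (parent' C v) = some c := by
  match v with
  | none => simp [zone'] at hv
  | some (i, true) =>
    simp only [zone'] at hv
    exact Or.inr (by simp [parent', zone']; exact Option.some_injective _ hv)
  | some (i, false) =>
    simp only [zone'] at hv
    rcases h : (pset C i).max with _ | j
    · exact Or.inl (by simp [parent', h, WithBot.recBotCoe, zone'])
    · have hj : j ∈ pset C i := Finset.mem_of_max h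
      have hcj : C j = C i := (Finset.mem_filter.mp hj).2.2
      exact Or.inr (by simp [parent', h, WithBot.recBotCoe, zone', hcj, hv])

lemma zone'_chain (i : Fin n) (m : ℕ) :
    zone' C ((parent' C)^[m] (some (i, true))) = none ∨
      zone' C ((parent' C)^[m] (some (i, true))) = some (C i) := by
  induction m with
  | zero => exact Or.inr (by simp [zone'])
  | succ m ih =>
    rw [Function.iterate_succ_apply']
    rcases ih with h | h
    · -- previous is none (zone none ⇒ v = none)
      have : (parent' C)^[m] (some (i, true)) = none := by
        rcases hv : (parent' C)^[m] (some (i, true)) with _ | ⟨j, b⟩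
        · rfl
        · rw [hv] at h; simp [zone'] at h
      rw [this]
      exact Or.inl (by simp [parent', zone'])
    · exact zone'_parent C _ _ h

end Construction

section ConstructionMain

variable {n k : ℕ}

abbrev NN (n : ℕ) : ℕ := 2 * n + 1

noncomputable def eC (n : ℕ) : Fin (NN n) ≃ Option (Fin n × Bool) :=
  Fintype.equivOfCardEq (by
    simp only [Fintype.card_fin, Fintype.card_option, Fintype.card_prod, Fintype.card_bool, NN]
    omega)

variable {G : SimpleGraph (Fin n)} (C : G.Coloring (Fin k))

noncomputable def parF : Fin (NN n) → Fin (NN n) :=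
  fun x => (eC n).symm (parent' C (eC n x))

noncomputable def rankF : Fin (NN n) → ℕ := fun x => rank' (eC n x)

noncomputable def rootF : Fin (NN n) := (eC n).symm none

lemma parF_iter (m : ℕ) (x : Fin (NN n)) :
    (parF C)^[m] x = (eC n).symm ((parent' C)^[m] (eC n x)) := by
  induction m with
  | zero => simp
  | succ m ih =>
    rw [Function.iterate_succ_apply', Function.iterate_succ_apply', ih, parF,
      Equiv.apply_symm_apply]

lemma parF_root : parF C (rootF (n := n)) = rootF := by
  rw [parF, rootF, Equiv.apply_symm_apply]; rfl

lemma parF_dec : ∀ x, x ≠ rootF (n := n) → rankF (parF C x) < rankF (n := n) x := by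
  intro x hx
  have hx' : eC n x ≠ none := fun h => hx (by rw [rootF, ← h, Equiv.symm_apply_apply])
  have := rank'_dec C (eC n x) hx'
  rwa [rankF, rankF, parF, Equiv.apply_symm_apply]

noncomputable def TC : SimpleGraph (Fin (NN n)) := parentGraph (parF C)

lemma TC_tree : (TC C (n := n)).IsTree :=
  ⟨pg_connected (parF_root C) (parF_dec C), pg_acyclic (parF_root C) (parF_dec C)⟩

noncomputable def yF (i : Fin n) : Fin (NN n) := (eC n).symm (some (i, true))

def DF (x : Fin (NN n)) : Set (Fin (NN n)) := {z | ∃ m, (parF C)^[m] x = z}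

lemma mem_DF_self (x : Fin (NN n)) : x ∈ DF C x := ⟨0, rfl⟩

lemma DF_sub {x y : Fin (NN n)} (h : x ∈ DF C y) : DF C x ⊆ DF C y := by
  obtain ⟨b, hb⟩ := h
  rintro z ⟨a, ha⟩
  exact ⟨a + b, by rw [Function.iterate_add_apply, hb, ha]⟩

lemma DF_par_closed {y z : Fin (NN n)} (h : z ∈ DF C y) : parF C z ∈ DF C y := by
  obtain ⟨m, hm⟩ := h
  exact ⟨m + 1, by rw [Function.iterate_succ_apply', hm]⟩

lemma rootF_mem_DF (x : Fin (NN n)) : rootF ∈ DF C x :=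
  reach_root (parF_root C) (parF_dec C) x

lemma walk_DF {x z y : Fin (NN n)} (hx : x ∈ DF C y) (hz : z ∈ DF C y) :
    ∃ w : (TC C).Walk x z, ∀ t ∈ w.support, t ∈ DF C y := by
  have key : ∀ (a b : ℕ) (x z : Fin (NN n)), (parF C)^[a] y = x → (parF C)^[b] y = z →
      a ≤ b → ∃ w : (TC C).Walk x z, ∀ t ∈ w.support, t ∈ DF C y := by
    intro a b x z ha hb hab
    have hz' : (parF C)^[b - a] x = z := by
      rw [← ha, ← Function.iterate_add_apply, Nat.sub_add_cancel hab, hb]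
    obtain ⟨w, hw⟩ := walkChain (par := parF C) (b - a) x
    refine ⟨w.copy rfl hz', ?_⟩
    intro t ht
    replace ht : t ∈ (w.copy rfl hz').support := ht
    rw [SimpleGraph.Walk.support_copy] at ht
    obtain ⟨l, -, hl⟩ := hw t ht
    exact DF_sub C (ha ▸ ⟨a, rfl⟩ : x ∈ DF C y) ⟨l, hl⟩
  obtain ⟨a, ha⟩ := hx
  obtain ⟨b, hb⟩ := hz
  rcases le_total a b with hab | hab
  · exact key a b x z ha hb hab
  · obtain ⟨w, hw⟩ := key b a z x hb ha hab
    exact ⟨w.reverse, fun t ht => hw t (by rwa [SimpleGraph.Walk.support_reverse,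
      List.mem_reverse] at ht)⟩

def childIn (x : Fin (NN n)) (S : Set (Fin (NN n))) : Set (Fin (NN n)) :=
  {c | parF C c = x ∧ c ≠ x ∧ c ∈ S}

lemma nbr_sub (x : Fin (NN n)) (S : Set (Fin (NN n))) :
    (TC C).neighborSet x ∩ S ⊆ {parF C x} ∪ childIn C x S := by
  rintro z ⟨⟨hne, h | h⟩, hS⟩
  · exact Or.inl h.symm
  · exact Or.inr ⟨h, Ne.symm hne, hS⟩

lemma child_DF_subsingleton (x y : Fin (NN n)) :
    (childIn C x (DF C y)).Subsingleton := by
  have key : ∀ l1 l2 : ℕ, l1 < l2 →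
      ∀ c1 c2 : Fin (NN n), (parF C)^[l1] y = c1 → (parF C)^[l2] y = c2 →
      parF C c1 = x → parF C c2 = x → c1 ≠ x → c2 ≠ x → False := by
    intro l1 l2 hl c1 c2 h1 h2 hp1 hp2 hc1 hc2
    have hx1 : (parF C)^[l1 + 1] y = x := by
      rw [Function.iterate_succ_apply', h1, hp1]
    have hxx : (parF C)^[l2 - l1] x = x := by
      have : (parF C)^[l2 - l1 - 1] x = c2 := by
        rw [← hx1, ← Function.iterate_add_apply]
        rw [show l2 - l1 - 1 + (l1 + 1) = l2 by omega, h2]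
      have e1 : l2 - l1 = (l2 - l1 - 1) + 1 := by omega
      rw [e1, Function.iterate_succ_apply', this, hp2]
    have hxroot : x = rootF := by
      by_contra hxr
      have h1' : rankF ((parF C)^[l2 - l1] x) ≤ rankF (n := n) (parF C x) := by
        have e2 : l2 - l1 = (l2 - l1 - 1) + 1 := by omega
        rw [e2, Function.iterate_succ_apply]
        exact iter_rank (parF_root C) (parF_dec C) _ _
      rw [hxx] at h1'
      exact absurd (lt_of_le_of_lt h1' (parF_dec C x hxr)) (lt_irrefl _)
    subst hxroot
    -- x = rootF : then c2 = rootF, contradiction with c2 ≠ x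
    have : (parF C)^[l2] y = rootF := by
      have : (parF C)^[l2] y = (parF C)^[l2 - (l1+1)] ((parF C)^[l1+1] y) := by
        rw [← Function.iterate_add_apply]
        congr 1; omega
      rw [this, hx1]
      exact iter_root (parF_root C) _
    exact hc2 (by rw [← h2, this])
  rintro c1 ⟨hp1, hc1, l1, h1⟩ c2 ⟨hp2, hc2, l2, h2⟩
  rcases lt_trichotomy l1 l2 with h | h | h
  · exact absurd (key l1 l2 h c1 c2 h1 h2 hp1 hp2 hc1 hc2) not_false
  · rw [← h1, ← h2, h]
  · exact absurd (key l2 l1 h c2 c1 h2 h1 hp2 hp1 hc2 hc1) not_false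

lemma ncard_sub_le (x : Fin (NN n)) (S A : Set (Fin (NN n)))
    (h : (TC C).neighborSet x ∩ S ⊆ {parF C x} ∪ A) (hA : A.Subsingleton) :
    ((TC C).neighborSet x ∩ S).ncard ≤ 2 := by
  calc ((TC C).neighborSet x ∩ S).ncard ≤ ({parF C x} ∪ A : Set _).ncard :=
        Set.ncard_le_ncard h (Set.toFinite _)
    _ ≤ ({parF C x} : Set _).ncard + A.ncard := Set.ncard_union_le _ _
    _ ≤ 1 + 1 := by
        gcongr
        · exact le_of_eq (Set.ncard_singleton _)
        · exact ncard_le_one_of_subsingleton hA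
    _ = 2 := rfl

lemma DF_pathSet (y : Fin (NN n)) : IsPathSet (TC C) (DF C y) := by
  refine ⟨⟨y, mem_DF_self C y⟩, fun x hx z hz => ?_, fun x hx => ?_⟩
  · obtain ⟨w, hw⟩ := walk_DF C hx hz
    exact ⟨w, hw⟩
  · exact ncard_sub_le C x _ _ (nbr_sub C x _) (child_DF_subsingleton C x y)

lemma DF_inter {i j : Fin n} (hij : C i ≠ C j) :
    DF C (yF i) ∩ DF C (yF j) ⊆ {rootF} := by
  rintro z ⟨⟨a, ha⟩, ⟨b, hb⟩⟩
  have hza : eC n z = (parent' C)^[a] (some (i, true)) := by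
    rw [← ha, parF_iter, Equiv.apply_symm_apply, yF, Equiv.apply_symm_apply]
  have hzb : eC n z = (parent' C)^[b] (some (j, true)) := by
    rw [← hb, parF_iter, Equiv.apply_symm_apply, yF, Equiv.apply_symm_apply]
  have hnone : eC n z = none := by
    rcases zone'_chain C i a with h | h
    · rw [← hza] at h
      rcases hz : eC n z with _ | ⟨p, b'⟩
      · rfl
      · rw [hz] at h; simp [zone'] at h
    · rcases zone'_chain C j b with h' | h'
      · rw [← hzb] at h'
        rcases hz : eC n z with _ | ⟨p, b'⟩
        · rfl
        · rw [hz] at h'; simp [zone'] at h'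
      · rw [← hza] at h; rw [← hzb] at h'
        rw [h] at h'
        exact absurd (Option.some_injective _ h') hij
  have : z = rootF := by rw [rootF, ← hnone, Equiv.symm_apply_apply]
  exact this ▸ rfl

lemma union_pathSet {i j : Fin n} (hij : C i ≠ C j) :
    IsPathSet (TC C) (DF C (yF i) ∪ DF C (yF j)) := by
  refine ⟨⟨yF i, Or.inl (mem_DF_self C _)⟩, ?_, ?_⟩
  · -- connectivity through rootF
    have key : ∀ x ∈ DF C (yF i) ∪ DF C (yF j), ∃ w : (TC C).Walk x rootF,
        ∀ t ∈ w.support, t ∈ DF C (yF i) ∪ DF C (yF j) := by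
      rintro x (hx | hx)
      · obtain ⟨w, hw⟩ := walk_DF C hx (rootF_mem_DF C _)
        exact ⟨w, fun t ht => Or.inl (hw t ht)⟩
      · obtain ⟨w, hw⟩ := walk_DF C hx (rootF_mem_DF C _)
        exact ⟨w, fun t ht => Or.inr (hw t ht)⟩
    intro x hx z hz
    obtain ⟨w1, hw1⟩ := key x hx
    obtain ⟨w2, hw2⟩ := key z hz
    refine ⟨w1.append w2.reverse, fun t ht => ?_⟩
    rw [SimpleGraph.Walk.mem_support_append_iff] at ht
    rcases ht with ht | ht
    · exact hw1 t ht
    · exact hw2 t (by rwa [SimpleGraph.Walk.support_reverse, List.mem_reverse] at ht)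
  · intro x hx
    by_cases hxr : x = rootF
    · subst hxr
      have hsub : (TC C).neighborSet rootF ∩ (DF C (yF i) ∪ DF C (yF j)) ⊆
          childIn C rootF (DF C (yF i)) ∪ childIn C rootF (DF C (yF j)) := by
        rintro z ⟨⟨hne, h | h⟩, hS⟩
        · exact absurd (h.symm.trans (parF_root C)).symm hne
        · rcases hS with hS | hS
          · exact Or.inl ⟨h, Ne.symm hne, hS⟩
          · exact Or.inr ⟨h, Ne.symm hne, hS⟩
      calc ((TC C).neighborSet rootF ∩ (DF C (yF i) ∪ DF C (yF j))).ncard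
          ≤ (childIn C rootF (DF C (yF i)) ∪ childIn C rootF (DF C (yF j))).ncard :=
            Set.ncard_le_ncard hsub (Set.toFinite _)
        _ ≤ (childIn C rootF (DF C (yF i))).ncard + (childIn C rootF (DF C (yF j))).ncard :=
            Set.ncard_union_le _ _
        _ ≤ 1 + 1 := by
            gcongr
            · exact ncard_le_one_of_subsingleton (child_DF_subsingleton C _ _)
            · exact ncard_le_one_of_subsingleton (child_DF_subsingleton C _ _)
        _ = 2 := rfl
    · -- x ≠ root : at most one of the two child sets is nonempty
      by_cases hci : (childIn C x (DF C (yF i))).Nonempty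
      · have hcj : childIn C x (DF C (yF j)) = ∅ := by
          obtain ⟨c1, hp1, hc1, hm1⟩ := hci
          rw [Set.eq_empty_iff_forall_notMem]
          rintro c2 ⟨hp2, hc2, hm2⟩
          have hxi : x ∈ DF C (yF i) := hp1 ▸ DF_par_closed C hm1
          have hxj : x ∈ DF C (yF j) := hp2 ▸ DF_par_closed C hm2
          exact hxr (DF_inter C hij ⟨hxi, hxj⟩)
        refine ncard_sub_le C x _ _ ?_ (child_DF_subsingleton C x (yF i))
        intro z hz
        rcases nbr_sub C x _ hz with h | h
        · exact Or.inl h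
        · rcases h.2.2 with hS | hS
          · exact Or.inr ⟨h.1, h.2.1, hS⟩
          · exact absurd (hcj ▸ (⟨h.1, h.2.1, hS⟩ : z ∈ childIn C x (DF C (yF j))))
              (Set.notMem_empty z)
      · refine ncard_sub_le C x _ _ ?_ (child_DF_subsingleton C x (yF j))
        intro z hz
        rcases nbr_sub C x _ hz with h | h
        · exact Or.inl h
        · rcases h.2.2 with hS | hS
          · exact absurd ⟨z, h.1, h.2.1, hS⟩ hci
          · exact Or.inr ⟨h.1, h.2.1, hS⟩

lemma singleton_pathSet (x : Fin (NN n)) : IsPathSet (TC C) ({x} : Set (Fin (NN n))) := by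
  refine ⟨⟨x, rfl⟩, ?_, ?_⟩
  · rintro a rfl b rfl
    exact ⟨SimpleGraph.Walk.nil, by simp⟩
  · intro a ha
    calc ((TC C).neighborSet a ∩ {x}).ncard ≤ ({x} : Set _).ncard :=
          Set.ncard_le_ncard Set.inter_subset_right (Set.toFinite _)
      _ ≤ 2 := by simp

lemma yF_inj : Function.Injective (yF (n := n)) := by
  intro a b h
  have := (eC n).symm.injective h
  simpa using this

lemma yF_mem_DF {a b : Fin n} : yF a ∈ DF C (yF b) ↔ a = b := by
  constructor
  · rintro ⟨m, hm⟩
    cases m with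
    | zero => exact (yF_inj hm).symm
    | succ m =>
      exfalso
      have : (parent' C)^[m+1] (some (b, true)) = some (a, true) := by
        have := congrArg (eC n) hm
        rwa [parF_iter, Equiv.apply_symm_apply, yF, Equiv.apply_symm_apply, yF,
          Equiv.apply_symm_apply] at this
      rw [Function.iterate_succ_apply'] at this
      rcases parent'_shape C ((parent' C)^[m] (some (b, true))) with h | ⟨j, h⟩
      · rw [this] at h; exact Option.some_ne_none _ h
      · rw [this] at h; simp at h
  · rintro rfl
    exact mem_DF_self C _

end ConstructionMain

section RepAssembly

variable {n k : ℕ} {G : SimpleGraph (Fin n)} (C : G.Coloring (Fin k))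

/-- the transported path family -/
noncomputable def pathT : HatIdx n G → Set (Fin (NN n))
  | Sum.inl i => {yF i}
  | Sum.inr (Sum.inl p) => DF C (yF p.1.1) ∪ DF C (yF p.1.2)
  | Sum.inr (Sum.inr s) => DF C (yF s.1)

lemma pathT_isPath (u : HatIdx n G) : IsPathSet (TC C) (pathT C u) := by
  match u with
  | Sum.inl i => exact singleton_pathSet C _
  | Sum.inr (Sum.inl ⟨⟨a, b⟩, hlt, hadj⟩) => exact union_pathSet C (C.valid hadj)
  | Sum.inr (Sum.inr s) => exact DF_pathSet C _

lemma singleton_inter_union_nonempty {i a b : Fin n} :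
    (({yF i} : Set (Fin (NN n))) ∩ (DF C (yF a) ∪ DF C (yF b))).Nonempty ↔ i = a ∨ i = b := by
  constructor
  · rintro ⟨z, rfl, hz | hz⟩
    · exact Or.inl ((yF_mem_DF C).mp hz)
    · exact Or.inr ((yF_mem_DF C).mp hz)
  · rintro (rfl | rfl)
    · exact ⟨yF i, rfl, Or.inl (mem_DF_self C _)⟩
    · exact ⟨yF i, rfl, Or.inr (mem_DF_self C _)⟩

lemma singleton_inter_DF_nonempty {i a : Fin n} :
    (({yF i} : Set (Fin (NN n))) ∩ DF C (yF a)).Nonempty ↔ i = a := by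
  constructor
  · rintro ⟨z, rfl, hz⟩
    exact (yF_mem_DF C).mp hz
  · rintro rfl
    exact ⟨yF i, rfl, mem_DF_self C _⟩

lemma hat_inter_singleton_union {i a b : Fin n} :
    (({some i} : Set (Option (Fin n))) ∩ {some a, none, some b}).Nonempty ↔ i = a ∨ i = b := by
  constructor
  · rintro ⟨z, rfl, h | h | h⟩ <;> simp_all
  · rintro (rfl | rfl)
    · exact ⟨some i, rfl, Or.inl rfl⟩
    · exact ⟨some i, rfl, Or.inr (Or.inr rfl)⟩

lemma hat_inter_singleton_pair {i a : Fin n} :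
    (({some i} : Set (Option (Fin n))) ∩ {none, some a}).Nonempty ↔ i = a := by
  constructor
  · rintro ⟨z, rfl, h | h⟩ <;> simp_all
  · rintro rfl
    exact ⟨some i, rfl, Or.inr rfl⟩

lemma pathT_adj_iff (u v : HatIdx n G) (hne : u ≠ v) :
    ((hatG n G).Adj u v ↔ (pathT C u ∩ pathT C v).Nonempty) := by
  have hadj : (hatG n G).Adj u v ↔ (u ≠ v ∧ (hatPath n G u ∩ hatPath n G v).Nonempty) :=
    Iff.rfl
  rw [hadj, and_iff_right hne]
  match u, v with
  | Sum.inl i, Sum.inl j =>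
    have hij : i ≠ j := fun h => hne (by rw [h])
    constructor
    · rintro ⟨z, hz1, hz2⟩
      simp only [hatPath, Set.mem_singleton_iff] at hz1 hz2
      exact absurd (Option.some_injective _ (hz1 ▸ hz2 ▸ rfl : some i = some j)) hij
    · rintro ⟨z, hz1, hz2⟩
      simp only [pathT, Set.mem_singleton_iff] at hz1 hz2
      exact absurd (yF_inj (hz1 ▸ hz2 ▸ rfl : yF i = yF j)) hij
  | Sum.inl i, Sum.inr (Sum.inl ⟨⟨a, b⟩, hab⟩) =>
    show (({some i} : Set (Option (Fin n))) ∩ {some a, none, some b}).Nonempty ↔ _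
    rw [hat_inter_singleton_union]
    exact (singleton_inter_union_nonempty C).symm
  | Sum.inl i, Sum.inr (Sum.inr ⟨a, ha⟩) =>
    show (({some i} : Set (Option (Fin n))) ∩ {none, some a}).Nonempty ↔ _
    rw [hat_inter_singleton_pair]
    exact (singleton_inter_DF_nonempty C).symm
  | Sum.inr (Sum.inl ⟨⟨a, b⟩, hab⟩), Sum.inl i =>
    show (({some a, none, some b} : Set (Option (Fin n))) ∩ {some i}).Nonempty ↔ _
    rw [Set.inter_comm, hat_inter_singleton_union, Set.inter_comm]
    exact (singleton_inter_union_nonempty C).symm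
  | Sum.inr (Sum.inr ⟨a, ha⟩), Sum.inl i =>
    show (({none, some a} : Set (Option (Fin n))) ∩ {some i}).Nonempty ↔ _
    rw [Set.inter_comm, hat_inter_singleton_pair, Set.inter_comm]
    exact (singleton_inter_DF_nonempty C).symm
  | Sum.inr (Sum.inl ⟨⟨a, b⟩, hab⟩), Sum.inr (Sum.inl ⟨⟨a', b'⟩, hab'⟩) =>
    constructor
    · intro _
      exact ⟨rootF, Or.inl (rootF_mem_DF C _), Or.inl (rootF_mem_DF C _)⟩
    · intro _
      exact ⟨none, Or.inr (Or.inl rfl), Or.inr (Or.inl rfl)⟩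
  | Sum.inr (Sum.inl ⟨⟨a, b⟩, hab⟩), Sum.inr (Sum.inr ⟨a', ha'⟩) =>
    constructor
    · intro _
      exact ⟨rootF, Or.inl (rootF_mem_DF C _), rootF_mem_DF C _⟩
    · intro _
      exact ⟨none, Or.inr (Or.inl rfl), Or.inl rfl⟩
  | Sum.inr (Sum.inr ⟨a', ha'⟩), Sum.inr (Sum.inl ⟨⟨a, b⟩, hab⟩) =>
    constructor
    · intro _
      exact ⟨rootF, rootF_mem_DF C _, Or.inl (rootF_mem_DF C _)⟩
    · intro _
      exact ⟨none, Or.inl rfl, Or.inr (Or.inl rfl)⟩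
  | Sum.inr (Sum.inr ⟨a, ha⟩), Sum.inr (Sum.inr ⟨a', ha'⟩) =>
    constructor
    · intro _
      exact ⟨rootF, rootF_mem_DF C _, rootF_mem_DF C _⟩
    · intro _
      exact ⟨none, Or.inl rfl, Or.inl rfl⟩

noncomputable def repC : VPTRep (hatG n G) (TC C) where
  tree := TC_tree C
  path := pathT C
  isPath := pathT_isPath C
  adj_iff := pathT_adj_iff C

/-- Degree bounds for the host tree. -/
lemma TC_degree (hk : 3 ≤ k) (x : Fin (NN n)) : ((TC C).neighborSet x).ncard ≤ k := by
  have hnbr : (TC C).neighborSet x ⊆ {parF C x} ∪ {c | parF C c = x ∧ c ≠ x} := by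
    rintro z ⟨hne, h | h⟩
    · exact Or.inl h.symm
    · exact Or.inr ⟨h, Ne.symm hne⟩
  rcases hex : eC n x with _ | ⟨⟨i, b⟩⟩
  · -- x = rootF
    have hxr : x = rootF := by rw [rootF, ← hex, Equiv.symm_apply_apply]
    subst hxr
    have hsub : (TC C).neighborSet rootF ⊆ {c | parF C c = rootF ∧ c ≠ rootF} := by
      rintro z ⟨hne, h | h⟩
      · exact absurd (h.symm.trans (parF_root C)).symm hne
      · exact ⟨h, Ne.symm hne⟩
    have hk0 : 0 < k := by omega
    have hinj : Set.InjOn (fun c => (zone' C (eC n c)).getD ⟨0, hk0⟩)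
        {c | parF C c = rootF ∧ c ≠ rootF} := by
      rintro c1 ⟨hp1, hc1⟩ c2 ⟨hp2, hc2⟩ hf
      -- each c is some (i, false) with pset empty
      have key : ∀ c : Fin (NN n), parF C c = rootF → c ≠ rootF →
          ∃ i : Fin n, eC n c = some (i, false) ∧ pset C i = ∅ := by
        intro c hp hc
        have hc' : eC n c ≠ none := fun h => hc (by rw [rootF, ← h, Equiv.symm_apply_apply])
        have hpar : parent' C (eC n c) = none := by
          have := congrArg (eC n) hp
          rwa [parF, Equiv.apply_symm_apply, rootF, Equiv.apply_symm_apply] at this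
        rcases hce : eC n c with _ | ⟨⟨i, b⟩⟩
        · exact absurd hce hc'
        · cases b
          · rcases hmax : (pset C i).max with _ | j
            · exact ⟨i, rfl, Finset.max_eq_bot.mp hmax⟩
            · rw [hce] at hpar
              simp [parent', hmax, WithBot.recBotCoe] at hpar
          · rw [hce] at hpar
            simp [parent'] at hpar
      obtain ⟨i1, he1, hp1'⟩ := key c1 hp1 hc1
      obtain ⟨i2, he2, hp2'⟩ := key c2 hp2 hc2
      simp only [he1, he2, zone'] at hf
      have hcc : C i1 = C i2 := by simpa using hf
      have : i1 = i2 := by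
        by_contra hne12
        rcases lt_or_gt_of_ne hne12 with hlt | hlt
        · have : i1 ∈ pset C i2 := Finset.mem_filter.mpr ⟨Finset.mem_univ _, hlt, hcc⟩
          rw [hp2'] at this; exact absurd this (Finset.notMem_empty _)
        · have : i2 ∈ pset C i1 := Finset.mem_filter.mpr ⟨Finset.mem_univ _, hlt, hcc.symm⟩
          rw [hp1'] at this; exact absurd this (Finset.notMem_empty _)
      apply (eC n).injective
      rw [he1, he2, this]
    calc ((TC C).neighborSet rootF).ncard
        ≤ ({c | parF C c = rootF ∧ c ≠ rootF} : Set _).ncard :=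
          Set.ncard_le_ncard hsub (Set.toFinite _)
      _ ≤ (Set.univ : Set (Fin k)).ncard := by
          apply Set.ncard_le_ncard_of_injOn _ (fun a _ => Set.mem_univ _) hinj
            (Set.toFinite _)
      _ = k := by rw [Set.ncard_univ, Nat.card_eq_fintype_card, Fintype.card_fin]
  · cases b
    · -- x = s_i : degree ≤ 3
      have hchild : {c | parF C c = x ∧ c ≠ x} ⊆
          {(eC n).symm (some (i, true))} ∪
            {c | ∃ j, eC n c = some (j, false) ∧ (pset C j).max = some i} := by
        rintro c ⟨hp, hc⟩
        have hpar : parent' C (eC n c) = some (i, false) := by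
          have := congrArg (eC n) hp
          rwa [parF, Equiv.apply_symm_apply, hex] at this
        rcases hce : eC n c with _ | ⟨⟨j, b'⟩⟩
        · rw [hce] at hpar; simp [parent'] at hpar
        · cases b'
          · rcases hmax : (pset C j).max with _ | j'
            · rw [hce] at hpar; simp [parent', hmax, WithBot.recBotCoe] at hpar
            · rw [hce] at hpar
              simp only [parent', hmax, WithBot.recBotCoe] at hpar
              have : j' = i := by simpa using hpar
              exact Or.inr ⟨j, hce, this ▸ hmax⟩
          · rw [hce] at hpar
            simp only [parent'] at hpar
            have : j = i := by simpa using hpar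
            subst this
            exact Or.inl (show _ ∈ ({_} : Set _) from by rw [← hce, Equiv.symm_apply_apply]; exact rfl)
      have hsub2 : ({c | ∃ j, eC n c = some (j, false) ∧ (pset C j).max = some i} :
          Set (Fin (NN n))).Subsingleton := by
        rintro c1 ⟨j1, he1, hm1⟩ c2 ⟨j2, he2, hm2⟩
        have hj : j1 = j2 := by
          by_contra hne12
          have hi1 : i ∈ pset C j1 := Finset.mem_of_max hm1
          have hi2 : i ∈ pset C j2 := Finset.mem_of_max hm2
          have hlt1 : i < j1 := (Finset.mem_filter.mp hi1).2.1
          have hci1 : C i = C j1 := (Finset.mem_filter.mp hi1).2.2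
          have hlt2 : i < j2 := (Finset.mem_filter.mp hi2).2.1
          have hci2 : C i = C j2 := (Finset.mem_filter.mp hi2).2.2
          rcases lt_or_gt_of_ne hne12 with hlt | hlt
          · have : j1 ∈ pset C j2 :=
              Finset.mem_filter.mpr ⟨Finset.mem_univ _, hlt, hci1.symm.trans hci2⟩
            have := Finset.le_max this
            rw [hm2] at this
            exact absurd (WithBot.coe_le_coe.mp this) (not_le_of_gt hlt1)
          · have : j2 ∈ pset C j1 :=
              Finset.mem_filter.mpr ⟨Finset.mem_univ _, hlt, hci2.symm.trans hci1⟩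
            have := Finset.le_max this
            rw [hm1] at this
            exact absurd (WithBot.coe_le_coe.mp this) (not_le_of_gt hlt2)
        apply (eC n).injective
        rw [he1, he2, hj]
      calc ((TC C).neighborSet x).ncard
          ≤ ({parF C x} ∪ ({(eC n).symm (some (i, true))} ∪
              {c | ∃ j, eC n c = some (j, false) ∧ (pset C j).max = some i}) : Set _).ncard := by
            apply Set.ncard_le_ncard _ (Set.toFinite _)
            intro z hz
            rcases hnbr hz with h | h
            · exact Or.inl h
            · exact Or.inr (hchild h)
        _ ≤ 1 + (1 + 1) := by
            refine le_trans (Set.ncard_union_le _ _) ?_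
            gcongr
            · simp
            · refine le_trans (Set.ncard_union_le _ _) ?_
              gcongr
              · simp
              · exact ncard_le_one_of_subsingleton hsub2
        _ ≤ k := by omega
    · -- x = y_i : degree ≤ 1
      have hchild : {c | parF C c = x ∧ c ≠ x} = ∅ := by
        rw [Set.eq_empty_iff_forall_notMem]
        rintro c ⟨hp, hc⟩
        have hpar : parent' C (eC n c) = some (i, true) := by
          have := congrArg (eC n) hp
          rwa [parF, Equiv.apply_symm_apply, hex] at this
        rcases parent'_shape C (eC n c) with h | ⟨j, h⟩
        · rw [hpar] at h; exact Option.some_ne_none _ h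
        · rw [hpar] at h; simp at h
      calc ((TC C).neighborSet x).ncard
          ≤ ({parF C x} ∪ {c | parF C c = x ∧ c ≠ x} : Set _).ncard :=
            Set.ncard_le_ncard hnbr (Set.toFinite _)
        _ ≤ 1 + 0 := by
            refine le_trans (Set.ncard_union_le _ _) ?_
            gcongr
            · simp
            · rw [hchild]; simp
        _ ≤ k := by omega

/-- Construction direction: if G is k-colorable with k ≥ 3 then Ĝ ∈ [k,2,1]. -/
theorem memH21_of_colorable {n k : ℕ} (G : SimpleGraph (Fin n)) (hcol : G.Colorable k)
    (hk : 3 ≤ k) : MemH21 (hatG n G) k := by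
  obtain ⟨C⟩ := hcol
  exact ⟨NN n, TC C, repC C, TC_degree C hk⟩

end RepAssembly

section TreeUtil

open SimpleGraph Walk

variable {W : Type*} [DecidableEq W] {T : SimpleGraph W} (hT : T.IsTree)

/-- The unique path between two vertices of a tree. -/
noncomputable def tpath (a b : W) : T.Walk a b := (hT.existsUnique_path a b).exists.choose

lemma tpath_isPath (a b : W) : (tpath hT a b).IsPath :=
  (hT.existsUnique_path a b).exists.choose_spec

lemma tpath_unique {a b : W} (q : T.Walk a b) (hq : q.IsPath) : q = tpath hT a b := by
  obtain ⟨p, hp, hun⟩ := hT.existsUnique_path a b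
  rw [hun q hq, hun (tpath hT a b) (tpath_isPath hT a b)]

/-- first vertex of a walk lying in S (S contains the endpoint) -/
lemma exists_first_meet (S : Set W) : ∀ {a b : W} (Q : T.Walk a b), b ∈ S →
    ∃ (m : W) (Q1 : T.Walk a m), m ∈ S ∧ (∀ x ∈ Q1.support, x ∈ S → x = m) ∧
      (∀ x ∈ Q1.support, x ∈ Q.support) ∧ (Q.IsPath → Q1.IsPath) := by
  intro a b Q
  induction Q with
  | nil =>
    intro hb
    exact ⟨_, Walk.nil, hb, by simp, by simp, fun _ => Walk.IsPath.nil⟩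
  | @cons u v b hadj w ih =>
    intro hb
    by_cases hu : u ∈ S
    · exact ⟨u, Walk.nil, hu, by simp, by simp, fun _ => Walk.IsPath.nil⟩
    · obtain ⟨m, Q1, hm, hQ1, hsub, hpath⟩ := ih hb
      refine ⟨m, Walk.cons hadj Q1, hm, ?_, ?_, ?_⟩
      · intro x hx hxS
        rw [Walk.support_cons, List.mem_cons] at hx
        rcases hx with rfl | hx
        · exact absurd hxS hu
        · exact hQ1 x hx hxS
      · intro x hx
        rw [Walk.support_cons, List.mem_cons] at hx
        rw [Walk.support_cons, List.mem_cons]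
        rcases hx with rfl | hx
        · exact Or.inl rfl
        · exact Or.inr (hsub x hx)
      · intro hP
        rw [Walk.cons_isPath_iff] at hP ⊢
        exact ⟨hpath hP.1, fun hc => hP.2 (hsub u hc)⟩

lemma append_isPath {a m c : W} (p : T.Walk a m) (q : T.Walk m c) (hp : p.IsPath)
    (hq : q.IsPath) (hint : ∀ x, x ∈ p.support → x ∈ q.support → x = m) :
    (p.append q).IsPath := by
  rw [Walk.isPath_def, Walk.support_append, List.nodup_append]
  refine ⟨hp.support_nodup, ?_, ?_⟩
  · have := hq.support_nodup
    rw [q.support_eq_cons] at this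
    exact this.of_cons
  · intro x hx y hx' hxy
    subst hxy
    have hxq : x ∈ q.support := by
      rw [q.support_eq_cons]
      exact List.mem_cons_of_mem _ hx'
    have hxm : x = m := hint x hx hxq
    subst hxm
    have := hq.support_nodup
    rw [q.support_eq_cons] at this
    exact (List.nodup_cons.mp this).1 hx'

/-- connected-in-itself sets of a tree contain the unique path between their points -/
def Stree (T : SimpleGraph W) (S : Set W) : Prop :=
  ∀ x ∈ S, ∀ y ∈ S, ∀ (hT : T.IsTree), ∀ z ∈ (tpath hT x y).support, z ∈ S

lemma stree_of_pathSet {S : Set W} (hS : IsPathSet T S) : Stree T S := by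
  intro x hx y hy hT' z hz
  obtain ⟨w, hw⟩ := hS.2.1 x hx y hy
  have hbp : w.bypass = tpath hT' x y := tpath_unique hT' w.bypass w.bypass_isPath
  rw [← hbp] at hz
  exact hw z (w.support_bypass_subset hz)

lemma stree_inter {S1 S2 : Set W} (h1 : Stree T S1) (h2 : Stree T S2) :
    Stree T (S1 ∩ S2) := by
  rintro x ⟨hx1, hx2⟩ y ⟨hy1, hy2⟩ hT' z hz
  exact ⟨h1 x hx1 y hy1 hT' z hz, h2 x hx2 y hy2 hT' z hz⟩

include hT in
/-- median / 3-set Helly for subtree-like sets -/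
lemma helly3 {A B C : Set W} (hA : Stree T A) (hB : Stree T B) (hC : Stree T C)
    (hab : (A ∩ B).Nonempty) (hac : (A ∩ C).Nonempty) (hbc : (B ∩ C).Nonempty) :
    (A ∩ B ∩ C).Nonempty := by
  obtain ⟨c, hcA, hcB⟩ := hab
  obtain ⟨b, hbA, hbC⟩ := hac
  obtain ⟨a, haB, haC⟩ := hbc
  -- P : path b → c lies in A ; Q : path a → b
  set P := tpath hT b c with hP
  obtain ⟨m, Q1, hmP, hQ1, hQsub, hQpath⟩ :=
    exists_first_meet (S := {x | x ∈ P.support}) (tpath hT a b) P.start_mem_support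
  -- m ∈ path a c
  have hQ2 : (P.dropUntil m hmP).IsPath := (tpath_isPath hT b c).dropUntil hmP
  have happ : (Q1.append (P.dropUntil m hmP)).IsPath := by
    apply append_isPath _ _ (hQpath (tpath_isPath hT a b)) hQ2
    intro x hx hx'
    exact hQ1 x hx (P.support_dropUntil_subset hmP hx')
  have hm_ac : m ∈ (tpath hT a c).support := by
    rw [← tpath_unique hT _ happ]
    rw [Walk.mem_support_append_iff]
    exact Or.inl Q1.end_mem_support
  have hm_ab : m ∈ (tpath hT a b).support := hQsub m Q1.end_mem_support
  refine ⟨m, ⟨?_, ?_⟩, ?_⟩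
  · exact hA b hbA c hcA hT m hmP
  · exact hB a haB c hcB hT m hm_ac
  · exact hC a haC b hbC hT m hm_ab

end TreeUtil

section TreeUtil2

open SimpleGraph Walk

variable {W : Type*} [DecidableEq W] {T : SimpleGraph W} (hT : T.IsTree)

include hT in
/-- Helly property for finite families of subtree-like sets. -/
lemma helly_family {ι : Type*} : ∀ (F : Finset ι) (f : ι → Set W),
    (∀ i ∈ F, Stree T (f i)) → (∀ i ∈ F, ∀ j ∈ F, (f i ∩ f j).Nonempty) →
    F.Nonempty → ∃ p, ∀ i ∈ F, p ∈ f i := by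
  intro F
  induction F using Finset.cons_induction with
  | empty => intro f _ _ hne; exact absurd hne (by simp)
  | cons i F hi ih =>
    intro f hf hpair _
    rcases F.eq_empty_or_nonempty with rfl | hFne
    · obtain ⟨p, hp, -⟩ := hpair i (by simp) i (by simp)
      exact ⟨p, by simpa using hp⟩
    · obtain ⟨p, hp⟩ := ih (fun j => f j ∩ f i)
        (fun j hj => stree_inter (hf j (Finset.mem_cons_of_mem hj))
          (hf i (Finset.mem_cons_self i F)))
        (fun j hj j' hj' => by
          have h3 := helly3 hT (hf j (Finset.mem_cons_of_mem hj))
            (hf j' (Finset.mem_cons_of_mem hj'))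
            (hf i (Finset.mem_cons_self i F))
            (hpair j (Finset.mem_cons_of_mem hj) j' (Finset.mem_cons_of_mem hj'))
            (hpair j (Finset.mem_cons_of_mem hj) i (Finset.mem_cons_self i F))
            (hpair j' (Finset.mem_cons_of_mem hj') i (Finset.mem_cons_self i F))
          obtain ⟨z, ⟨hz1, hz2⟩, hz3⟩ := h3
          exact ⟨z, ⟨hz1, hz3⟩, ⟨hz2, hz3⟩⟩)
        hFne
      obtain ⟨j0, hj0⟩ := hFne
      refine ⟨p, ?_⟩
      intro j hj
      rcases Finset.mem_cons.mp hj with rfl | hj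
      · exact (hp j0 hj0).2
      · exact (hp j hj).1

include hT in
/-- gate of a subtree-like set, seen from `y`. -/
lemma gate {S : Set W} (hS : Stree T S) {a0 : W} (ha0 : a0 ∈ S) (y : W) :
    ∃ α ∈ S, (∀ x ∈ (tpath hT y α).support, x ∈ S → x = α) ∧
      (∀ a ∈ S, ∀ z ∈ (tpath hT y α).support, z ∈ (tpath hT y a).support) := by
  obtain ⟨m, Q1, hmS, hQ1, hQsub, hQpath⟩ := exists_first_meet S (tpath hT y a0) ha0
  have hQ1path : Q1.IsPath := hQpath (tpath_isPath hT y a0)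
  have hQ1eq : Q1 = tpath hT y m := tpath_unique hT Q1 hQ1path
  refine ⟨m, hmS, by rw [← hQ1eq]; exact hQ1, ?_⟩
  intro a ha z hz
  rw [← hQ1eq] at hz
  have happ : (Q1.append (tpath hT m a)).IsPath := by
    apply append_isPath _ _ hQ1path (tpath_isPath hT m a)
    intro x hx hx'
    exact hQ1 x hx (hS m hmS a ha hT x hx')
  rw [← tpath_unique hT _ happ, Walk.mem_support_append_iff]
  exact Or.inl hz

/-- two paths from a common start with endpoints not on the other path diverge at a
vertex giving (at least locally) two distinct continuations. -/
lemma diverge : ∀ {y α : W} (p1 : T.Walk y α) {β : W} (p2 : T.Walk y β),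
    p1.IsPath → p2.IsPath → α ∉ p2.support → β ∉ p1.support →
    ∃ m x1 x2, T.Adj m x1 ∧ T.Adj m x2 ∧ x1 ≠ x2 ∧ m ∈ p1.support ∧ m ∈ p2.support ∧
      x1 ∈ p1.support ∧ x2 ∈ p2.support ∧
      (m = y ∨ ∃ z, T.Adj m z ∧ z ≠ x1 ∧ z ≠ x2 ∧ z ∈ p1.support ∧ z ∈ p2.support) := by
  intro y α p1
  induction p1 with
  | nil =>
    intro β p2 h1 h2 hα hβ
    exact absurd p2.start_mem_support hα
  | @cons y u1 α hadj w1 ih =>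
    intro β p2 h1 h2 hα hβ
    cases p2 with
    | nil => exact absurd (Walk.start_mem_support _) hβ
    | @cons _ u2 _ hadj2 w2 =>
      by_cases h12 : u1 = u2
      · subst h12
        have hw1 : w1.IsPath := h1.of_cons
        have hw2 : w2.IsPath := h2.of_cons
        have hy1 : y ∉ w1.support := (Walk.cons_isPath_iff _ _).mp h1 |>.2
        have hy2 : y ∉ w2.support := (Walk.cons_isPath_iff _ _).mp h2 |>.2
        have hα' : α ∉ w2.support := fun hc => hα (by
          rw [Walk.support_cons]; exact List.mem_cons_of_mem _ hc)
        have hβ' : β ∉ w1.support := fun hc => hβ (by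
          rw [Walk.support_cons]; exact List.mem_cons_of_mem _ hc)
        obtain ⟨m, x1, x2, ha1, ha2, hne, hm1, hm2, hx1, hx2, hrest⟩ :=
          ih w2 hw1 hw2 hα' hβ'
        refine ⟨m, x1, x2, ha1, ha2, hne, ?_, ?_, ?_, ?_, ?_⟩
        · rw [Walk.support_cons]; exact List.mem_cons_of_mem _ hm1
        · rw [Walk.support_cons]; exact List.mem_cons_of_mem _ hm2
        · rw [Walk.support_cons]; exact List.mem_cons_of_mem _ hx1
        · rw [Walk.support_cons]; exact List.mem_cons_of_mem _ hx2
        · rcases hrest with rfl | ⟨z, hz1, hz2, hz3, hz4, hz5⟩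
          · -- m = u1 : use y as the third neighbor
            refine Or.inr ⟨y, hadj.symm, ?_, ?_, ?_, ?_⟩
            · exact fun hc => hy1 (hc ▸ hx1)
            · exact fun hc => hy2 (hc ▸ hx2)
            · exact Walk.start_mem_support _
            · exact Walk.start_mem_support _
          · refine Or.inr ⟨z, hz1, hz2, hz3, ?_, ?_⟩
            · rw [Walk.support_cons]; exact List.mem_cons_of_mem _ hz4
            · rw [Walk.support_cons]; exact List.mem_cons_of_mem _ hz5
      · refine ⟨y, u1, u2, hadj, hadj2, h12, Walk.start_mem_support _,
          Walk.start_mem_support _, ?_, ?_, Or.inl rfl⟩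
        · rw [Walk.support_cons]; exact List.mem_cons_of_mem _ w1.start_mem_support
        · rw [Walk.support_cons]; exact List.mem_cons_of_mem _ w2.start_mem_support

include hT in
/-- two neighbors of `p` from which a common vertex is reachable avoiding `p` coincide -/
lemma branch_unique {p u u' x : W} (h1 : T.Adj p u) (h2 : T.Adj p u')
    (w1 : T.Walk u x) (hw1 : p ∉ w1.support) (w2 : T.Walk u' x) (hw2 : p ∉ w2.support) :
    u = u' := by
  by_contra hne
  set q := (w1.append w2.reverse).bypass with hq
  have hqp : q.IsPath := Walk.bypass_isPath _
  have hqsup : p ∉ q.support := by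
    intro hc
    have := Walk.support_bypass_subset _ hc
    rw [Walk.mem_support_append_iff] at this
    rcases this with h | h
    · exact hw1 h
    · rw [Walk.support_reverse, List.mem_reverse] at h
      exact hw2 h
  have hrpath : (q.concat h2.symm).IsPath := by
    rw [Walk.concat_eq_append]
    apply append_isPath _ _ hqp (by
      rw [Walk.cons_isPath_iff]
      exact ⟨Walk.IsPath.nil, by simp [h2.ne']⟩)
    intro z hz hz'
    rw [Walk.support_cons, List.mem_cons] at hz'
    rcases hz' with rfl | hz'
    · rfl
    · simp only [Walk.support_nil, List.mem_singleton] at hz'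
      exact absurd (hz' ▸ hz) hqsup
  have hcyc : (Walk.cons h1 (q.concat h2.symm)).IsCycle := by
    rw [Walk.cons_isCycle_iff]
    refine ⟨hrpath, ?_⟩
    intro hc
    rw [Walk.edges_concat, List.concat_eq_append, List.mem_append] at hc
    rcases hc with hc | hc
    · exact hqsup (Walk.fst_mem_support_of_mem_edges q hc)
    · simp only [List.mem_singleton] at hc
      rw [Sym2.eq_iff] at hc
      rcases hc with ⟨h, h'⟩ | ⟨h, h'⟩
      · exact h2.ne h
      · exact hne h'
  exact hT.IsAcyclic _ hcyc

include hT in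
lemma second_vertex {p x : W} (hx : x ≠ p) :
    ∃ u, T.Adj p u ∧ u ∈ (tpath hT p x).support ∧
      ∃ w : T.Walk u x, p ∉ w.support := by
  rcases htp : tpath hT p x with _ | @⟨_, u, _, hadj, w⟩
  · exact absurd rfl hx
  · have hpath := tpath_isPath hT p x
    rw [htp, Walk.cons_isPath_iff] at hpath
    refine ⟨u, hadj, ?_, w, hpath.2⟩
    rw [Walk.support_cons]
    exact List.mem_cons_of_mem _ w.start_mem_support

include hT in
lemma tpath_avoid {p y x : W} (w : T.Walk y x) (hw : p ∉ w.support) :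
    p ∉ (tpath hT y x).support := by
  have : w.bypass = tpath hT y x := tpath_unique hT _ (Walk.bypass_isPath _)
  rw [← this]
  exact fun hc => hw (Walk.support_bypass_subset _ hc)

end TreeUtil2

section HatCombinatorics

variable {n : ℕ} {G : SimpleGraph (Fin n)}

lemma hat_edge_set {i j : Fin n} (hij : G.Adj i j) :
    ∃ u : HatIdx n G, hatPath n G u = {some i, none, some j} := by
  rcases lt_or_gt_of_ne (fun h : i = j => hij.ne h) with hlt | hlt
  · exact ⟨Sum.inr (Sum.inl ⟨(i, j), hlt, hij⟩), rfl⟩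
  · refine ⟨Sum.inr (Sum.inl ⟨(j, i), hlt, hij.symm⟩), ?_⟩
    show ({some j, none, some i} : Set (Option (Fin n))) = {some i, none, some j}
    ext z
    simp only [Set.mem_insert_iff, Set.mem_singleton_iff]
    tauto

lemma private_idx {i j : Fin n} (hij : G.Adj i j) :
    ∃ u : HatIdx n G, none ∈ hatPath n G u ∧ some i ∈ hatPath n G u ∧
      some j ∉ hatPath n G u := by
  classical
  by_cases hd : (G.neighborSet i).ncard = 1
  · refine ⟨Sum.inr (Sum.inr ⟨i, hd⟩), Or.inl rfl, Or.inr rfl, ?_⟩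
    intro hc
    rcases hc with hc | hc
    · exact Option.some_ne_none _ hc
    · exact hij.ne (Option.some_injective _ hc).symm
  · have hjmem : j ∈ G.neighborSet i := hij
    have : ∃ j', G.Adj i j' ∧ j' ≠ j := by
      by_contra hcon
      push_neg at hcon
      have : G.neighborSet i = {j} := by
        apply Set.eq_singleton_iff_unique_mem.mpr
        exact ⟨hjmem, fun x hx => hcon x hx⟩
      rw [this] at hd
      simp at hd
    obtain ⟨j', hij', hj'j⟩ := this
    obtain ⟨u, hu⟩ := hat_edge_set hij'
    refine ⟨u, ?_, ?_, ?_⟩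
    · rw [hu]; exact Or.inr (Or.inl rfl)
    · rw [hu]; exact Or.inl rfl
    · rw [hu]
      intro hc
      rcases hc with hc | hc | hc
      · exact hij.ne (Option.some_injective _ hc).symm
      · exact Option.some_ne_none _ hc
      · exact hj'j ((Option.some_injective _ hc).symm)

lemma hat_ne_of_none {u v : HatIdx n G} (hu : none ∉ hatPath n G u)
    (hv : none ∈ hatPath n G v) : u ≠ v := fun h => hu (h ▸ hv)

end HatCombinatorics

section MainL2

open SimpleGraph Walk

theorem colorable_of_memH21 {n k : ℕ} (G : SimpleGraph (Fin n)) (hk : 2 ≤ k)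
    (hmem : MemH21 (hatG n G) k) : G.Colorable k := by
  classical
  by_cases hE : ∃ a b : Fin n, G.Adj a b
  swap
  · exact ⟨⟨fun _ => ⟨0, by omega⟩, fun {a b} hab => absurd ⟨a, b, hab⟩ hE⟩⟩
  by_cases hstar : ∃ i0 : Fin n, ∀ a b : Fin n, G.Adj a b → i0 = a ∨ i0 = b
  · obtain ⟨i0, hi0⟩ := hstar
    refine ⟨SimpleGraph.Coloring.mk
      (fun v => if v = i0 then ⟨0, by omega⟩ else ⟨1, by omega⟩) ?_⟩
    intro a b hab heq
    beta_reduce at heq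
    rcases hi0 a b hab with rfl | rfl
    · rw [if_pos rfl, if_neg hab.ne'] at heq
      exact Nat.zero_ne_one (congrArg Fin.val heq)
    · rw [if_neg hab.ne, if_pos rfl] at heq
      exact Nat.zero_ne_one (congrArg Fin.val heq).symm
  obtain ⟨N, T, rep, hdeg⟩ := hmem
  have hT := rep.tree
  have hStree : ∀ u, Stree T (rep.path u) := fun u => stree_of_pathSet (rep.isPath u)
  have hQne : ∀ u, (rep.path u).Nonempty := fun u => (rep.isPath u).1
  -- Helly: the paths of the central clique share a common vertex p
  letI : Fintype (HatIdx n G) := Fintype.ofFinite _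
  obtain ⟨p, hp⟩ : ∃ p, ∀ u ∈ Finset.univ.filter (fun u : HatIdx n G =>
      none ∈ hatPath n G u), p ∈ rep.path u := by
    apply helly_family hT _ rep.path
    · exact fun u _ => hStree u
    · intro u hu v hv
      rcases eq_or_ne u v with rfl | huv
      · obtain ⟨x, hx⟩ := hQne u
        exact ⟨x, hx, hx⟩
      · apply (rep.adj_iff u v huv).mp
        refine ⟨huv, none, ?_, ?_⟩
        · exact (Finset.mem_filter.mp hu).2
        · exact (Finset.mem_filter.mp hv).2
    · obtain ⟨a, b, hab⟩ := hE
      obtain ⟨u, hu⟩ := hat_edge_set hab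
      exact ⟨u, Finset.mem_filter.mpr ⟨Finset.mem_univ _,
        by rw [hu]; exact Or.inr (Or.inl rfl)⟩⟩
  have hclique : ∀ u : HatIdx n G, none ∈ hatPath n G u → p ∈ rep.path u :=
    fun u hu => hp u (Finset.mem_filter.mpr ⟨Finset.mem_univ _, hu⟩)
  -- every vertex misses some edge
  have hmiss : ∀ i : Fin n, ∃ a b, G.Adj a b ∧ i ≠ a ∧ i ≠ b := by
    intro i
    by_contra hcon
    push_neg at hcon
    apply hstar
    refine ⟨i, fun a b hab => ?_⟩
    by_cases hia : i = a
    · exact Or.inl hia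
    · exact Or.inr (hcon a b hab hia)
  -- the singleton paths avoid p
  have hdisj : ∀ (i : Fin n) (u : HatIdx n G), some i ∉ hatPath n G u →
      (Sum.inl i : HatIdx n G) ≠ u → rep.path (Sum.inl i) ∩ rep.path u = ∅ := by
    intro i u hiu hne
    rw [← Set.not_nonempty_iff_eq_empty]
    intro hcon
    have := (rep.adj_iff _ u hne).mpr hcon
    obtain ⟨-, z, hz1, hz2⟩ := this
    have : z = some i := hz1
    exact hiu (this ▸ hz2)
  have hpnot : ∀ i : Fin n, p ∉ rep.path (Sum.inl i) := by
    intro i hpQ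
    obtain ⟨a, b, hab, hia, hib⟩ := hmiss i
    obtain ⟨u, hu⟩ := hat_edge_set hab
    have hnone : none ∈ hatPath n G u := by rw [hu]; exact Or.inr (Or.inl rfl)
    have hne : (Sum.inl i : HatIdx n G) ≠ u :=
      hat_ne_of_none (fun hc => Option.some_ne_none _ (hc : none = some i).symm) hnone
    have hd := hdisj i u (by
      rw [hu]
      rintro (hc | hc | hc)
      · exact hia (Option.some_injective _ hc)
      · exact Option.some_ne_none _ hc
      · exact hib (Option.some_injective _ hc)) hne
    have hpu := hclique u hnone
    have : p ∈ rep.path (Sum.inl i) ∩ rep.path u := ⟨hpQ, hpu⟩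
    rw [hd] at this
    exact this
  -- branch assignment
  have hbr : ∀ i : Fin n, ∃ u, T.Adj p u ∧
      ∀ x ∈ rep.path (Sum.inl i), ∃ w : T.Walk u x, p ∉ w.support := by
    intro i
    obtain ⟨x0, hx0⟩ := hQne (Sum.inl i)
    have hx0p : x0 ≠ p := fun h => hpnot i (h ▸ hx0)
    obtain ⟨u, hu, hus, w, hw⟩ := second_vertex hT hx0p
    refine ⟨u, hu, fun x hx => ?_⟩
    obtain ⟨w2, hw2⟩ := (rep.isPath (Sum.inl i)).2.1 x0 hx0 x hx
    have hw2p : p ∉ w2.support := fun hc => hpnot i (hw2 p hc)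
    refine ⟨w.append w2, ?_⟩
    rw [Walk.mem_support_append_iff]
    rintro (hc | hc)
    · exact hw hc
    · exact hw2p hc
  choose br hbrAdj hbrReach using hbr
  -- membership of the branch vertex in clique paths meeting Q i
  have hbranchmem : ∀ (u : HatIdx n G) (i : Fin n), p ∈ rep.path u →
      (rep.path u ∩ rep.path (Sum.inl i)).Nonempty → br i ∈ rep.path u := by
    intro u i hpu ⟨a', ha'Z, ha'A⟩
    have ha'p : a' ≠ p := fun h => hpnot i (h ▸ ha'A)
    obtain ⟨v, hv, hvs, w, hw⟩ := second_vertex hT ha'p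
    obtain ⟨w', hw'⟩ := hbrReach i a' ha'A
    have hveq : v = br i := branch_unique hT hv (hbrAdj i) w hw w' hw'
    rw [← hveq]
    exact hStree u p hpu a' ha'Z hT v hvs
  -- properness
  have hproper : ∀ i j : Fin n, G.Adj i j → br i ≠ br j := by
    intro i j hij hbr_eq
    -- A and B are disjoint
    have hneij : (Sum.inl i : HatIdx n G) ≠ Sum.inl j := by
      simp only [ne_eq, Sum.inl.injEq]
      exact hij.ne
    have hAB : rep.path (Sum.inl i) ∩ rep.path (Sum.inl j) = ∅ := by
      rw [← Set.not_nonempty_iff_eq_empty]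
      intro hcon
      obtain ⟨-, z, hz1, hz2⟩ := (rep.adj_iff _ _ hneij).mpr hcon
      exact hij.ne (Option.some_injective _ ((hz1 : z = some i) ▸ (hz2 : z = some j)))
    -- the edge path Z
    obtain ⟨uZ, huZ⟩ := hat_edge_set hij
    have huZnone : none ∈ hatPath n G uZ := by rw [huZ]; exact Or.inr (Or.inl rfl)
    have hpZ : p ∈ rep.path uZ := hclique uZ huZnone
    have hZA : (rep.path uZ ∩ rep.path (Sum.inl i)).Nonempty := by
      have hne : (Sum.inl i : HatIdx n G) ≠ uZ :=
        hat_ne_of_none (fun hc => Option.some_ne_none _ (hc : none = some i).symm) huZnone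
      have := (rep.adj_iff _ uZ hne).mp ⟨hne, some i, rfl, by rw [huZ]; exact Or.inl rfl⟩
      rwa [Set.inter_comm] at this
    have hZB : (rep.path uZ ∩ rep.path (Sum.inl j)).Nonempty := by
      have hne : (Sum.inl j : HatIdx n G) ≠ uZ :=
        hat_ne_of_none (fun hc => Option.some_ne_none _ (hc : none = some j).symm) huZnone
      have := (rep.adj_iff _ uZ hne).mp ⟨hne, some j, rfl,
        by rw [huZ]; exact Or.inr (Or.inr rfl)⟩
      rwa [Set.inter_comm] at this
    -- the private paths Zi (misses B) and Zj (misses A)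
    obtain ⟨uZi, hZinone, hZi_i, hZi_j⟩ := private_idx hij
    obtain ⟨uZj, hZjnone, hZj_j, hZj_i⟩ := private_idx hij.symm
    have hpZi : p ∈ rep.path uZi := hclique uZi hZinone
    have hpZj : p ∈ rep.path uZj := hclique uZj hZjnone
    have hZiA : (rep.path uZi ∩ rep.path (Sum.inl i)).Nonempty := by
      have hne : (Sum.inl i : HatIdx n G) ≠ uZi :=
        hat_ne_of_none (fun hc => Option.some_ne_none _ (hc : none = some i).symm) hZinone
      have := (rep.adj_iff _ uZi hne).mp ⟨hne, some i, rfl, hZi_i⟩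
      rwa [Set.inter_comm] at this
    have hZjB : (rep.path uZj ∩ rep.path (Sum.inl j)).Nonempty := by
      have hne : (Sum.inl j : HatIdx n G) ≠ uZj :=
        hat_ne_of_none (fun hc => Option.some_ne_none _ (hc : none = some j).symm) hZjnone
      have := (rep.adj_iff _ uZj hne).mp ⟨hne, some j, rfl, hZj_j⟩
      rwa [Set.inter_comm] at this
    have hZiB : rep.path (Sum.inl j) ∩ rep.path uZi = ∅ := by
      apply hdisj j uZi hZi_j
      exact hat_ne_of_none (fun hc => Option.some_ne_none _ (hc : none = some j).symm) hZinone
    have hZjA : rep.path (Sum.inl i) ∩ rep.path uZj = ∅ := by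
      apply hdisj i uZj hZj_i
      exact hat_ne_of_none (fun hc => Option.some_ne_none _ (hc : none = some i).symm) hZjnone
    -- (br i) lies in Z, Zi, Zj but not in A, B
    have hyZ : (br i) ∈ rep.path uZ := hbranchmem uZ i hpZ hZA
    have hyZi : (br i) ∈ rep.path uZi := hbranchmem uZi i hpZi hZiA
    have hyZj : (br i) ∈ rep.path uZj := by
      rw [hbr_eq]
      exact hbranchmem uZj j hpZj hZjB
    have hyA : (br i) ∉ rep.path (Sum.inl i) := by
      intro hc
      have : (br i) ∈ rep.path (Sum.inl i) ∩ rep.path uZj := ⟨hc, hyZj⟩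
      rw [hZjA] at this; exact this
    have hyB : (br i) ∉ rep.path (Sum.inl j) := by
      intro hc
      have : (br i) ∈ rep.path (Sum.inl j) ∩ rep.path uZi := ⟨hc, hyZi⟩
      rw [hZiB] at this; exact this
    -- gates α of A and β of B from (br i)
    obtain ⟨a0, ha0Zi, ha0A⟩ := hZiA
    obtain ⟨b0, hb0Zj, hb0B⟩ := hZjB
    obtain ⟨α, hαA, hgi, hexti⟩ := gate hT (hStree (Sum.inl i)) ha0A (br i)
    obtain ⟨β, hβB, hgj, hextj⟩ := gate hT (hStree (Sum.inl j)) hb0B (br i)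
    -- Pi ⊆ Zi ∩ Z ; Pj ⊆ Zj ∩ Z
    have hPiZi : ∀ z ∈ (tpath hT (br i) α).support, z ∈ rep.path uZi := by
      intro z hz
      exact hStree uZi (br i) hyZi a0 ha0Zi hT z (hexti a0 ha0A z hz)
    have hPjZj : ∀ z ∈ (tpath hT (br i) β).support, z ∈ rep.path uZj := by
      intro z hz
      exact hStree uZj (br i) hyZj b0 hb0Zj hT z (hextj b0 hb0B z hz)
    obtain ⟨a1, ha1Z, ha1A⟩ := hZA
    obtain ⟨b1, hb1Z, hb1B⟩ := hZB
    have hPiZ : ∀ z ∈ (tpath hT (br i) α).support, z ∈ rep.path uZ := by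
      intro z hz
      exact hStree uZ (br i) hyZ a1 ha1Z hT z (hexti a1 ha1A z hz)
    have hPjZ : ∀ z ∈ (tpath hT (br i) β).support, z ∈ rep.path uZ := by
      intro z hz
      exact hStree uZ (br i) hyZ b1 hb1Z hT z (hextj b1 hb1B z hz)
    -- endpoints not on the other gate path
    have hαPj : α ∉ (tpath hT (br i) β).support := by
      intro hc
      have : α ∈ rep.path (Sum.inl i) ∩ rep.path uZj := ⟨hαA, hPjZj α hc⟩
      rw [hZjA] at this; exact this
    have hβPi : β ∉ (tpath hT (br i) α).support := by
      intro hc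
      have : β ∈ rep.path (Sum.inl j) ∩ rep.path uZi := ⟨hβB, hPiZi β hc⟩
      rw [hZiB] at this; exact this
    -- p is not on the gate paths
    have hpPi : p ∉ (tpath hT (br i) α).support := by
      obtain ⟨w, hw⟩ := hbrReach i α hαA
      exact tpath_avoid hT w hw
    have hpPj : p ∉ (tpath hT (br i) β).support := by
      rw [hbr_eq]
      obtain ⟨w, hw⟩ := hbrReach j β hβB
      exact tpath_avoid hT w hw
    -- divergence gives a vertex of degree ≥ 3 inside Z
    obtain ⟨m, x1, x2, ha1', ha2', hne12, hm1, hm2, hx1, hx2, hrest⟩ :=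
      diverge (tpath hT (br i) α) (tpath hT (br i) β) (tpath_isPath hT (br i) α) (tpath_isPath hT (br i) β)
        hαPj hβPi
    obtain ⟨z, hzadj, hzx1, hzx2, hzZ⟩ :
        ∃ z, T.Adj m z ∧ z ≠ x1 ∧ z ≠ x2 ∧ z ∈ rep.path uZ := by
      rcases hrest with rfl | ⟨z, hz1, hz2, hz3, hz4, hz5⟩
      · refine ⟨p, (hbrAdj i).symm, ?_, ?_, hpZ⟩
        · exact fun hc => hpPi (hc ▸ hx1)
        · exact fun hc => hpPj (hc ▸ hx2)
      · exact ⟨z, hz1, hz2, hz3, hPiZ z hz4⟩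
    have hsub : ({x1, x2, z} : Set (Fin N)) ⊆ T.neighborSet m ∩ rep.path uZ := by
      rintro t (rfl | rfl | rfl)
      · exact ⟨ha1', hPiZ _ hx1⟩
      · exact ⟨ha2', hPjZ _ hx2⟩
      · exact ⟨hzadj, hzZ⟩
    have h3 : ({x1, x2, z} : Set (Fin N)).ncard = 3 := by
      rw [Set.ncard_eq_three]
      exact ⟨x1, x2, z, hne12, Ne.symm hzx1, Ne.symm hzx2, rfl⟩
    have hbound := (rep.isPath uZ).2.2 m (hPiZ m hm1)
    have : 3 ≤ 2 := by
      calc 3 = ({x1, x2, z} : Set (Fin N)).ncard := h3.symm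
        _ ≤ (T.neighborSet m ∩ rep.path uZ).ncard :=
            Set.ncard_le_ncard hsub (Set.toFinite _)
        _ ≤ 2 := hbound
    omega
  -- wrap up: coloring into the neighbors of p
  letI : Fintype ↥(T.neighborSet p) := Fintype.ofFinite _
  have hcolor : G.Coloring ↥(T.neighborSet p) :=
    SimpleGraph.Coloring.mk (fun i => ⟨br i, hbrAdj i⟩)
      (fun {a b} hab => by
        intro hc
        exact hproper a b hab (congrArg Subtype.val hc))
  have hcard : Fintype.card ↥(T.neighborSet p) ≤ k := by
    have : Fintype.card ↥(T.neighborSet p) = (T.neighborSet p).ncard := by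
      rw [← Nat.card_coe_set_eq, Nat.card_eq_fintype_card]
    rw [this]
    exact hdeg p
  exact (hcolor.colorable).mono hcard

end MainL2

end VPTAux

/-- For a finite connected graph `G` on `Fin n` and any `h ≥ 4`, the
constructed graph `Ĝ = hatG n G` belongs to `[h,2,1] - [h-1,2,1]` iff `χ(G) = h`. -/
theorem stmt9 (n : ℕ) (G : SimpleGraph (Fin n)) (hconn : G.Connected)
    (h : ℕ) (hh : 4 ≤ h) :
    (MemH21 (hatG n G) h ∧ ¬ MemH21 (hatG n G) (h - 1)) ↔
      G.chromaticNumber = (h : ℕ∞) := by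
  constructor
  · rintro ⟨hmem, hnot⟩
    have hcol : G.Colorable h := VPTAux.colorable_of_memH21 G (by omega) hmem
    have hle : G.chromaticNumber ≤ (h : ℕ∞) := hcol.chromaticNumber_le
    have hgt : ¬ G.Colorable (h - 1) := fun hc =>
      hnot (VPTAux.memH21_of_colorable G hc (by omega))
    have hgt' : ¬ G.chromaticNumber ≤ ((h - 1 : ℕ) : ℕ∞) := fun hle' =>
      hgt (chromaticNumber_le_iff_colorable.mp hle')
    refine le_antisymm hle ?_
    have hlt : ((h - 1 : ℕ) : ℕ∞) < G.chromaticNumber := not_le.mp hgt'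
    have h1 : ((h - 1 : ℕ) : ℕ∞) + 1 ≤ G.chromaticNumber := Order.add_one_le_of_lt hlt
    have h2 : ((h - 1 : ℕ) : ℕ∞) + 1 = (h : ℕ∞) := by
      have he : h - 1 + 1 = h := by omega
      conv_rhs => rw [← he]
      push_cast
      ring
    rwa [h2] at h1
  · intro hchr
    constructor
    · exact VPTAux.memH21_of_colorable G
        (chromaticNumber_le_iff_colorable.mp (le_of_eq hchr)) (by omega)
    · intro hmem'
      have hcol := VPTAux.colorable_of_memH21 G (by omega) hmem'
      have hle := hcol.chromaticNumber_le
      rw [hchr] at hle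
      have : h ≤ h - 1 := by exact_mod_cast hle
      omega
end

section
/- Let G be a finite connected simple graph with vertex set {v_1,…,v_n}, and let Ĝ be the split VPT graph constructed from G as follows: the host tree T is a star with center q and leaves y_1,…,y_n; the path family consists of a one-vertex path P_i = {y_i} for each 1≤i≤n, a path P_{ij} = {y_i,q,y_j} for each pair i<j with v_iv_j∈E(G), and a path P_{iq} = {q,y_i} for each i with d_G(v_i)=1; Ĝ is the vertex intersection graph of this path family. Then Ĝ is a split graph whose stable part consists of the n one-vertex paths P_i, whose central clique consists of all remaining paths (those containing q), and no stable vertex of Ĝ is dominated (i.e., for no i≠j does N(P_i) ⊆ N(P_j) hold in Ĝ). -/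
open SimpleGraph

lemma hatG_adj (n : ℕ) (G : SimpleGraph (Fin n)) (u v : HatIdx n G) :
    (hatG n G).Adj u v ↔ u ≠ v ∧ (hatPath n G u ∩ hatPath n G v).Nonempty := Iff.rfl

lemma exists_nbr (n : ℕ) (G : SimpleGraph (Fin n)) (hconn : G.Connected)
    (i j : Fin n) (hij : i ≠ j) : ∃ k, G.Adj i k := by
  obtain ⟨p⟩ := hconn i j
  cases p with
  | nil => exact absurd rfl hij
  | cons h q => exact ⟨_, h⟩

lemma exists_nbr_ne (n : ℕ) (G : SimpleGraph (Fin n)) (hconn : G.Connected)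
    (i j : Fin n) (hij : i ≠ j) (hdeg : (G.neighborSet i).ncard ≠ 1) :
    ∃ k, G.Adj i k ∧ k ≠ j := by
  by_contra hc
  push_neg at hc
  obtain ⟨k, hk⟩ := exists_nbr n G hconn i j hij
  apply hdeg
  have h1 : G.neighborSet i = {j} := by
    apply Set.eq_singleton_iff_unique_mem.2
    exact ⟨by rw [hc k hk] at hk; exact hk, fun x hx => hc x hx⟩
  rw [h1, Set.ncard_singleton]

/-- The constructed graph `Ĝ = hatG n G` is a split graph whose stable
part is the set of one-vertex paths `Pᵢ` and whose central clique is the set of the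
remaining paths (those containing `q`), and no stable vertex of `Ĝ` is dominated. -/
theorem stmt10 (n : ℕ) (G : SimpleGraph (Fin n)) (hconn : G.Connected) :
    IsSplitPartition (hatG n G) (Set.range (Sum.inl : Fin n → HatIdx n G)) (hatCq n G) ∧
    (∀ i j : Fin n, i ≠ j →
      ¬ ((hatG n G).neighborSet (Sum.inl i) ⊆ (hatG n G).neighborSet (Sum.inl j))) := by
  constructor
  · refine ⟨?_, ?_, ?_, ?_⟩
    · rintro (i | (p | i))
      · exact Or.inl ⟨i, rfl⟩
      · right; simp [hatCq, hatPath]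
      · right; simp [hatCq, hatPath]
    · rw [Set.disjoint_left]
      rintro _ ⟨i, rfl⟩ hc
      simp [hatCq, hatPath] at hc
    · rintro _ ⟨i, rfl⟩ _ ⟨j, rfl⟩ hadj
      rw [hatG_adj] at hadj
      obtain ⟨hne, x, hx1, hx2⟩ := hadj
      simp [hatPath] at hx1 hx2
      exact hne (by rw [hx1] at hx2; rw [Option.some_inj.1 hx2])
    · rintro u hu v hv hne
      exact (hatG_adj n G u v).2 ⟨hne, none, hu, hv⟩
  · intro i j hij hsub
    by_cases hdeg : (G.neighborSet i).ncard = 1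
    · have hmem : Sum.inr (Sum.inr ⟨i, hdeg⟩) ∈ (hatG n G).neighborSet (Sum.inl i) := by
        rw [SimpleGraph.mem_neighborSet, hatG_adj]
        exact ⟨by simp, some i, by simp [hatPath]⟩
      have h2 := hsub hmem
      rw [SimpleGraph.mem_neighborSet, hatG_adj] at h2
      obtain ⟨-, x, hx1, hx2⟩ := h2
      simp [hatPath] at hx1 hx2
      rw [hx1] at hx2
      simp at hx2
      exact hij hx2.symm
    · obtain ⟨k, hik, hkj⟩ := exists_nbr_ne n G hconn i j hij hdeg
      have hik' : i ≠ k := G.ne_of_adj hik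
      rcases lt_or_gt_of_ne hik' with h | h
      · have hmem : Sum.inr (Sum.inl ⟨(i, k), h, hik⟩) ∈
            (hatG n G).neighborSet (Sum.inl i) := by
          rw [SimpleGraph.mem_neighborSet, hatG_adj]
          exact ⟨by simp, some i, by simp [hatPath]⟩
        have h2 := hsub hmem
        rw [SimpleGraph.mem_neighborSet, hatG_adj] at h2
        obtain ⟨-, x, hx1, hx2⟩ := h2
        simp [hatPath] at hx1 hx2
        rw [hx1] at hx2
        simp at hx2
        rcases hx2 with h' | h'
        · exact hij h'.symm
        · exact hkj h'.symm
      · have hmem : Sum.inr (Sum.inl ⟨(k, i), h, hik.symm⟩) ∈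
            (hatG n G).neighborSet (Sum.inl i) := by
          rw [SimpleGraph.mem_neighborSet, hatG_adj]
          exact ⟨by simp, some i, by simp [hatPath]⟩
        have h2 := hsub hmem
        rw [SimpleGraph.mem_neighborSet, hatG_adj] at h2
        obtain ⟨-, x, hx1, hx2⟩ := h2
        simp [hatPath] at hx1 hx2
        rw [hx1] at hx2
        simp at hx2
        rcases hx2 with h' | h'
        · exact hkj h'.symm
        · exact hij h'.symm
end
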